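/- arXiv:1906.10319 — 3 statements merged into one kernel-verified Lean document; each statement's English description precedes it below -/
import Mathlib

section
/- Let f: L2(0,1) → ℝ∪{+∞} be symmetric. Then there exists a unique function 𝔣: P₂(ℝ) → ℝ∪{+∞} such that f(X) = 𝔣(law of X) for all X ∈ L2(0,1), and for this 𝔣: (a) f is proper if and only if 𝔣 is proper (not identically +∞); (b) f is lower semicontinuous with respect to the L2 norm if and only if 𝔣 is lower semicontinuous with respect to W₂, i.e., liminf_n 𝔣(μ_n) ≥ 𝔣(μ) whenever W₂(μ_n,μ) → 0; (c) f is convex if and only if for all μ, μ′ ∈ P₂(ℝ), every coupling π ∈ Π(μ,μ′), every α ∈ [0,1], and every pair (X,X′) ∈ L2(0,1)² whose joint law is π, 𝔣(law of αX + (1−α)X′) ≤ α·𝔣(μ) + (1−α)·𝔣(μ′). -/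
open MeasureTheory ProbabilityTheory Filter
open scoped ENNReal NNReal

noncomputable section

/-- Lebesgue measure restricted to the interval `(0,1)`. -/
def unitMeasure : Measure ℝ := volume.restrict (Set.Ioo (0:ℝ) 1)

/-- The Hilbert space `L2(0,1)`. -/
abbrev L2 : Type := Lp ℝ 2 unitMeasure

/-- The law (pushforward of Lebesgue measure on `(0,1)`) of `X ∈ L2(0,1)`. -/
def lawOf (X : L2) : Measure ℝ := Measure.map (fun t => X t) unitMeasure

/-- The joint law of a pair of elements of `L2(0,1)`. -/
def lawOf2 (X G : L2) : Measure (ℝ × ℝ) :=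
  Measure.map (fun t => (X t, G t)) unitMeasure

/-- Membership in the Wasserstein space `P₂(ℝ)`. -/
def MemP2 (μ : Measure ℝ) : Prop :=
  IsProbabilityMeasure μ ∧ Integrable (fun x : ℝ => x ^ 2) μ

/-- Membership in the Wasserstein space `P₂(ℝ²)`. -/
def MemP2Prod (π : Measure (ℝ × ℝ)) : Prop :=
  IsProbabilityMeasure π ∧ Integrable (fun q : ℝ × ℝ => q.1 ^ 2 + q.2 ^ 2) π

/-- `π` is a coupling of `μ` and `ν`. -/
def IsCoupling (π : Measure (ℝ × ℝ)) (μ ν : Measure ℝ) : Prop :=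
  π.fst = μ ∧ π.snd = ν

/-- Squared Wasserstein-2 distance on `P₂(ℝ)`. -/
def W2sq (μ ν : Measure ℝ) : ℝ :=
  sInf {r : ℝ | ∃ π : Measure (ℝ × ℝ), IsCoupling π μ ν ∧ r = ∫ q, (q.1 - q.2) ^ 2 ∂π}

/-- The Wasserstein-2 distance on `P₂(ℝ)`. -/
def W2 (μ ν : Measure ℝ) : ℝ := Real.sqrt (W2sq μ ν)

/-- Squared Wasserstein-2 distance on `P₂(ℝ²)` (Euclidean cost). -/
def W2sqProd (μ ν : Measure (ℝ × ℝ)) : ℝ :=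
  sInf {r : ℝ | ∃ π : Measure ((ℝ × ℝ) × (ℝ × ℝ)), π.fst = μ ∧ π.snd = ν ∧
    r = ∫ q, ((q.1.1 - q.2.1) ^ 2 + (q.1.2 - q.2.2) ^ 2) ∂π}

/-- The Wasserstein-2 distance on `P₂(ℝ²)`. -/
def W2Prod (μ ν : Measure (ℝ × ℝ)) : ℝ := Real.sqrt (W2sqProd μ ν)

/-- Convexity of an `ℝ ∪ {+∞}`-valued function. -/
def ConvexE {E : Type*} [AddCommMonoid E] [Module ℝ E] (f : E → EReal) : Prop :=
  ∀ x y : E, ∀ a b : ℝ, 0 ≤ a → 0 ≤ b → a + b = 1 →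
    f (a • x + b • y) ≤ (a : EReal) * f x + (b : EReal) * f y

/-- Objective of the scalar proximal problem. -/
def obj1 (ρ : ℝ → EReal) (y x : ℝ) : EReal :=
  (((1:ℝ)/2 * (y - x) ^ 2 : ℝ) : EReal) + ρ x

/-- `x` is the unique minimizer of `z ↦ ½(y−z)² + ρ(z)`. -/
def IsProx1 (ρ : ℝ → EReal) (y x : ℝ) : Prop :=
  (∀ z : ℝ, obj1 ρ y x ≤ obj1 ρ y z) ∧ ∀ z : ℝ, obj1 ρ y z ≤ obj1 ρ y x → z = x

/-- Objective of the proximal problem on `ℝ^p` (Euclidean norm). -/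
def objPi {p : ℕ} (f : (Fin p → ℝ) → EReal) (y x : Fin p → ℝ) : EReal :=
  (((1:ℝ)/2 * ∑ i, (y i - x i) ^ 2 : ℝ) : EReal) + f x

/-- `x` is the unique minimizer of `z ↦ ½‖y−z‖² + f(z)` on `ℝ^p`. -/
def IsProxPi {p : ℕ} (f : (Fin p → ℝ) → EReal) (y x : Fin p → ℝ) : Prop :=
  (∀ z, objPi f y x ≤ objPi f y z) ∧ ∀ z, objPi f y z ≤ objPi f y x → z = x

/-- Objective of the proximal problem on `L2(0,1)`. -/
def objL2 (f : L2 → EReal) (Y X : L2) : EReal :=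
  (((1:ℝ)/2 * ∫ t, (Y t - X t) ^ 2 ∂unitMeasure : ℝ) : EReal) + f X

/-- `P` is the unique minimizer of `X ↦ ½E[(Y−X)²] + f(X)` on `L2(0,1)`. -/
def IsProxL2 (f : L2 → EReal) (Y P : L2) : Prop :=
  (∀ X, objL2 f Y P ≤ objL2 f Y X) ∧ ∀ X, objL2 f Y X ≤ objL2 f Y P → X = P

/-- Permutation-symmetry of a function on `ℝ^p`. -/
def SymmPi {p : ℕ} (f : (Fin p → ℝ) → EReal) : Prop :=
  ∀ (σ : Equiv.Perm (Fin p)) (x : Fin p → ℝ), f (x ∘ σ) = f x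

/-- Symmetry (law-invariance) of a function on `L2(0,1)`. -/
def SymmL2 (f : L2 → EReal) : Prop :=
  ∀ X X' : L2, lawOf X = lawOf X' → f X = f X'

/-- `G` belongs to the subdifferential of `f` at `X`. -/
def InSubdiff (f : L2 → EReal) (X G : L2) : Prop :=
  ∀ X' : L2, f X + ((∫ t, G t * (X' t - X t) ∂unitMeasure : ℝ) : EReal) ≤ f X'

/-- Joint cyclic monotonicity of a set of measures on `ℝ²`. -/
def JointCycMono (K : Set (Measure (ℝ × ℝ))) : Prop :=
  ∀ (n : ℕ) (π : Fin n → Measure (ℝ × ℝ)), (∀ j, π j ∈ K) →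
    ∀ X G : Fin n → L2, (∀ j, lawOf2 (X j) (G j) = π j) →
      ∀ σ : Equiv.Perm (Fin n),
        ∑ j, ∫ t, X j t * G (σ j) t ∂unitMeasure ≤
          ∑ j, ∫ t, X j t * G j t ∂unitMeasure

/-- The standard Gaussian measure `N(0, I_p)` on `ℝ^p`. -/
def stdGaussPi (p : ℕ) : Measure (Fin p → ℝ) := Measure.pi fun _ => gaussianReal 0 1

/-- Convolution `μ * N(0, τ²)`. -/
def gaussConv (μ : Measure ℝ) (τ : ℝ) : Measure ℝ :=
  Measure.map (fun q : ℝ × ℝ => q.1 + q.2) (μ.prod (gaussianReal 0 (Real.toNNReal (τ ^ 2))))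

/-- Empirical distribution of the coordinates of a vector in `ℝ^p`. -/
def empDist {p : ℕ} (θ : Fin p → ℝ) : Measure ℝ :=
  ((p : ℝ≥0∞))⁻¹ • ∑ j : Fin p, Measure.dirac (θ j)

/-- Empirical joint distribution of the coordinate pairs of two vectors in `ℝ^p`. -/
def empPair {p : ℕ} (a b : Fin p → ℝ) : Measure (ℝ × ℝ) :=
  ((p : ℝ≥0∞))⁻¹ • ∑ j : Fin p, Measure.dirac (a j, b j)

/-- Non-decreasing and 1-Lipschitz (the class `PR₁`). -/
def IsPR1 (η : ℝ → ℝ) : Prop :=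
  Monotone η ∧ ∀ y y' : ℝ, |η y - η y'| ≤ |y - y'|


instance : IsProbabilityMeasure unitMeasure := by
  constructor
  rw [unitMeasure, Measure.restrict_apply MeasurableSet.univ, Set.univ_inter, Real.volume_Ioo]
  norm_num

lemma aemeas_coe (X : L2) : AEMeasurable (fun t => X t) unitMeasure :=
  (Lp.aestronglyMeasurable X).aemeasurable

lemma integrable_sq_coe (X : L2) : Integrable (fun t => (X t) ^ 2) unitMeasure := by
  have h := Lp.memLp X
  exact (memLp_two_iff_integrable_sq (Lp.aestronglyMeasurable X)).mp h

instance lawOf_prob (X : L2) : IsProbabilityMeasure (lawOf X) :=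
  Measure.isProbabilityMeasure_map (aemeas_coe X)

lemma memP2_lawOf (X : L2) : MemP2 (lawOf X) := by
  refine ⟨lawOf_prob X, ?_⟩
  rw [lawOf, integrable_map_measure (by fun_prop) (aemeas_coe X)]
  exact integrable_sq_coe X

lemma lawOf2_fst (X Y : L2) : (lawOf2 X Y).fst = lawOf X := by
  rw [lawOf2, Measure.fst_map_prodMk₀ (aemeas_coe Y), lawOf]

lemma lawOf2_snd (X Y : L2) : (lawOf2 X Y).snd = lawOf Y := by
  rw [lawOf2, Measure.snd_map_prodMk₀ (aemeas_coe X), lawOf]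

lemma isCoupling_lawOf2 (X Y : L2) : IsCoupling (lawOf2 X Y) (lawOf X) (lawOf Y) :=
  ⟨lawOf2_fst X Y, lawOf2_snd X Y⟩

/-! ### Quantile function -/

/-- Quantile function of `μ`, set to `0` outside `(0,1)`. -/
def qf (μ : Measure ℝ) (t : ℝ) : ℝ :=
  if t ∈ Set.Ioo (0:ℝ) 1 then sInf {x | t ≤ cdf μ x} else 0

variable {μ : Measure ℝ}

lemma qf_set_nonempty [IsProbabilityMeasure μ] {t : ℝ} (ht : t < 1) :
    {x | t ≤ cdf μ x}.Nonempty := by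
  have h := (tendsto_cdf_atTop μ).eventually (eventually_ge_nhds ht)
  exact h.exists

lemma qf_set_bddBelow [IsProbabilityMeasure μ] {t : ℝ} (ht : 0 < t) :
    BddBelow {x | t ≤ cdf μ x} := by
  have h := (tendsto_cdf_atBot μ).eventually (eventually_lt_nhds ht)
  obtain ⟨x₀, hx₀⟩ := h.exists
  refine ⟨x₀, fun y hy => ?_⟩
  by_contra hlt
  push_neg at hlt
  exact absurd (le_trans hy ((cdf μ).mono hlt.le)) (not_le.mpr hx₀)

lemma qf_mem [IsProbabilityMeasure μ] {t : ℝ} (ht : t ∈ Set.Ioo (0:ℝ) 1) :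
    t ≤ cdf μ (sInf {x | t ≤ cdf μ x}) := by
  set S := {x | t ≤ cdf μ x} with hS
  have hne : S.Nonempty := qf_set_nonempty ht.2
  have hbdd : BddBelow S := qf_set_bddBelow ht.1
  -- every point strictly above sInf S is in S
  have hub : ∀ z, sInf S < z → t ≤ cdf μ z := by
    intro z hz
    obtain ⟨y, hy, hyz⟩ := (csInf_lt_iff hbdd hne).mp hz
    exact le_trans hy ((cdf μ).mono hyz.le)
  have hrc : ContinuousWithinAt (cdf μ) (Set.Ioi (sInf S)) (sInf S) :=
    ((cdf μ).right_continuous _).mono Set.Ioi_subset_Ici_self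
  have : ∀ᶠ z in nhdsWithin (sInf S) (Set.Ioi (sInf S)), t ≤ cdf μ z :=
    eventually_nhdsWithin_of_forall (fun z hz => hub z hz)
  exact ge_of_tendsto hrc this

lemma qf_le_iff [IsProbabilityMeasure μ] {t : ℝ} (ht : t ∈ Set.Ioo (0:ℝ) 1) (x : ℝ) :
    qf μ t ≤ x ↔ t ≤ cdf μ x := by
  rw [qf, if_pos ht]
  constructor
  · intro h
    exact le_trans (qf_mem ht) ((cdf μ).mono h)
  · intro h
    exact csInf_le (qf_set_bddBelow ht.1) h

lemma measurable_qf [IsProbabilityMeasure μ] : Measurable (qf μ) := by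
  apply measurable_of_Iic
  intro x
  have : qf μ ⁻¹' Set.Iic x =
      (Set.Ioo (0:ℝ) 1 ∩ Set.Iic (cdf μ x)) ∪ ((Set.Ioo (0:ℝ) 1)ᶜ ∩ {t : ℝ | (0:ℝ) ≤ x}) := by
    ext t
    by_cases ht : t ∈ Set.Ioo (0:ℝ) 1
    · simp only [Set.mem_preimage, Set.mem_Iic, Set.mem_union, Set.mem_inter_iff, ht,
        Set.mem_compl_iff, not_true, false_and, or_false, true_and]
      exact qf_le_iff ht x
    · simp only [Set.mem_preimage, Set.mem_Iic, Set.mem_union, Set.mem_inter_iff, ht,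
        Set.mem_compl_iff, not_false_iff, false_and, true_and, false_or, Set.mem_setOf_eq, qf,
        if_neg ht, if_false]
  rw [this]
  by_cases h0 : (0:ℝ) ≤ x
  · have : {t : ℝ | (0:ℝ) ≤ x} = Set.univ := by ext; simp [h0]
    rw [this]
    exact (measurableSet_Ioo.inter measurableSet_Iic).union
      (measurableSet_Ioo.compl.inter MeasurableSet.univ)
  · have : {t : ℝ | (0:ℝ) ≤ x} = ∅ := by ext; simp [h0]
    rw [this]
    exact (measurableSet_Ioo.inter measurableSet_Iic).union
      (measurableSet_Ioo.compl.inter MeasurableSet.empty)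

lemma vol_Ioo_inter_Iic {c : ℝ} (h0 : 0 ≤ c) (h1 : c ≤ 1) :
    volume (Set.Ioo (0:ℝ) 1 ∩ Set.Iic c) = ENNReal.ofReal c := by
  rcases lt_or_ge c 1 with hc | hc
  · have : Set.Ioo (0:ℝ) 1 ∩ Set.Iic c = Set.Ioc 0 c := by
      ext t
      simp only [Set.mem_inter_iff, Set.mem_Ioo, Set.mem_Iic, Set.mem_Ioc]
      constructor
      · rintro ⟨⟨h₁, _⟩, h₃⟩; exact ⟨h₁, h₃⟩
      · rintro ⟨h₁, h₂⟩; exact ⟨⟨h₁, lt_of_le_of_lt h₂ hc⟩, h₂⟩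
    rw [this, Real.volume_Ioc, sub_zero]
  · have hc1 : c = 1 := le_antisymm h1 hc
    have : Set.Ioo (0:ℝ) 1 ∩ Set.Iic c = Set.Ioo 0 1 := by
      rw [hc1]; ext t; simp only [Set.mem_inter_iff, Set.mem_Ioo, Set.mem_Iic]
      exact ⟨fun h => h.1, fun h => ⟨h, h.2.le⟩⟩
    rw [this, Real.volume_Ioo, hc1]; norm_num

lemma map_qf [IsProbabilityMeasure μ] : Measure.map (qf μ) unitMeasure = μ := by
  have hprob : IsProbabilityMeasure (Measure.map (qf μ) unitMeasure) :=
    Measure.isProbabilityMeasure_map measurable_qf.aemeasurable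
  apply MeasureTheory.Measure.ext_of_Iic
  intro x
  rw [Measure.map_apply measurable_qf measurableSet_Iic, unitMeasure,
    Measure.restrict_apply (measurable_qf measurableSet_Iic)]
  have hset : qf μ ⁻¹' Set.Iic x ∩ Set.Ioo 0 1 = Set.Ioo (0:ℝ) 1 ∩ Set.Iic (cdf μ x) := by
    ext t
    simp only [Set.mem_inter_iff, Set.mem_preimage, Set.mem_Iic]
    constructor
    · rintro ⟨h₁, h₂⟩; exact ⟨h₂, (qf_le_iff h₂ x).mp h₁⟩
    · rintro ⟨h₁, h₂⟩; exact ⟨(qf_le_iff h₁ x).mpr h₂, h₁⟩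
  rw [hset, vol_Ioo_inter_Iic (cdf_nonneg μ x) (cdf_le_one μ x), ofReal_cdf]

lemma memℒp_qf (hμ : MemP2 μ) : MemLp (qf μ) 2 unitMeasure := by
  have : IsProbabilityMeasure μ := hμ.1
  have h1 : MemLp (fun x : ℝ => x) 2 μ := by
    have := (memLp_two_iff_integrable_sq (μ := μ) aestronglyMeasurable_id)
    exact this.mpr hμ.2
  have h2 := (memLp_map_measure_iff (μ := unitMeasure) (p := 2)
    (g := fun x : ℝ => x) (f := qf μ) aestronglyMeasurable_id measurable_qf.aemeasurable)
  rw [map_qf] at h2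
  exact h2.mp h1

/-- The canonical `L2` representative of a measure in `P₂`. -/
def qLp (μ : Measure ℝ) (hμ : MemP2 μ) : L2 := (memℒp_qf hμ).toLp (qf μ)

lemma coe_qLp (hμ : MemP2 μ) : (fun t => qLp μ hμ t) =ᵐ[unitMeasure] qf μ :=
  MemLp.coeFn_toLp _

lemma lawOf_qLp (hμ : MemP2 μ) : lawOf (qLp μ hμ) = μ := by
  have : IsProbabilityMeasure μ := hμ.1
  rw [lawOf, Measure.map_congr (coe_qLp hμ), map_qf]

/-! ### Layer-cake representation -/

lemma ofReal_max_zero (a : ℝ) : ENNReal.ofReal (max a 0) = ENNReal.ofReal a := by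
  rcases le_total a 0 with h | h
  · rw [max_eq_right h, ENNReal.ofReal_of_nonpos h, ENNReal.ofReal_zero]
  · rw [max_eq_left h]

lemma layercake_general {Ω : Type*} [MeasurableSpace Ω] (π : Measure Ω) [SFinite π]
    (f g : Ω → ℝ) (U V : ℝ → Set ℝ)
    (hU : ∀ x, volume (U x) = ENNReal.ofReal x) (hV : ∀ x, volume (V x) = ENNReal.ofReal x)
    (hMU : MeasurableSet {p : Ω × ℝ | p.2 ∈ U (f p.1)})
    (hMV : MeasurableSet {p : Ω × ℝ | p.2 ∈ V (g p.1)}) :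
    ∫⁻ ω, ENNReal.ofReal (f ω) * ENNReal.ofReal (g ω) ∂π
      = ∫⁻ q, π {ω | q.1 ∈ U (f ω) ∧ q.2 ∈ V (g ω)} ∂(volume.prod volume) := by
  have hM : MeasurableSet {p : Ω × ℝ × ℝ | p.2.1 ∈ U (f p.1) ∧ p.2.2 ∈ V (g p.1)} := by
    have m1 : Measurable (fun p : Ω × ℝ × ℝ => (p.1, p.2.1)) :=
      measurable_fst.prodMk (measurable_fst.comp measurable_snd)
    have m2 : Measurable (fun p : Ω × ℝ × ℝ => (p.1, p.2.2)) :=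
      measurable_fst.prodMk (measurable_snd.comp measurable_snd)
    exact (hMU.preimage m1).inter (hMV.preimage m2)
  have key : ∫⁻ ω, ENNReal.ofReal (f ω) * ENNReal.ofReal (g ω) ∂π
      = (π.prod (volume.prod volume)) {p : Ω × ℝ × ℝ | p.2.1 ∈ U (f p.1) ∧ p.2.2 ∈ V (g p.1)} := by
    rw [Measure.prod_apply hM]
    congr 1
    funext ω
    have : (Prod.mk ω ⁻¹' {p : Ω × ℝ × ℝ | p.2.1 ∈ U (f p.1) ∧ p.2.2 ∈ V (g p.1)})
        = (U (f ω)) ×ˢ (V (g ω)) := by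
      ext q; simp [Set.mem_prod]
    rw [this, Measure.prod_prod, hU, hV]
  rw [key, Measure.prod_apply_symm hM]
  rfl


/-! ### Pointwise coupling bounds -/

lemma max_mul_max_le_sq (a b : ℝ) : max a 0 * max b 0 ≤ a ^ 2 + b ^ 2 := by
  have hp : (max a 0) ^ 2 ≤ a ^ 2 := by
    rcases le_total a 0 with h | h
    · rw [max_eq_right h]; simpa using sq_nonneg a
    · rw [max_eq_left h]
  have hq : (max b 0) ^ 2 ≤ b ^ 2 := by
    rcases le_total b 0 with h | h
    · rw [max_eq_right h]; simpa using sq_nonneg b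
    · rw [max_eq_left h]
  nlinarith [sq_nonneg (max a 0 - max b 0), le_max_right a 0, le_max_right b 0]

lemma lint_mul_ne_top {Ω : Type*} [MeasurableSpace Ω] (π : Measure Ω) (f g : Ω → ℝ)
    (h2 : Integrable (fun ω => f ω ^ 2 + g ω ^ 2) π) :
    ∫⁻ ω, ENNReal.ofReal (f ω) * ENNReal.ofReal (g ω) ∂π ≠ ⊤ := by
  have hle : ∫⁻ ω, ENNReal.ofReal (f ω) * ENNReal.ofReal (g ω) ∂π
      ≤ ∫⁻ ω, ENNReal.ofReal (f ω ^ 2 + g ω ^ 2) ∂π := by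
    apply lintegral_mono
    intro ω
    simp only []
    rw [← ofReal_max_zero (f ω), ← ofReal_max_zero (g ω),
      ← ENNReal.ofReal_mul (le_max_right _ _)]
    exact ENNReal.ofReal_le_ofReal (max_mul_max_le_sq _ _)
  exact (lt_of_le_of_lt hle h2.lintegral_lt_top).ne

lemma integral_mul_decomp {Ω : Type*} [MeasurableSpace Ω] (π : Measure Ω)
    (f g : Ω → ℝ) (hf : Measurable f) (hg : Measurable g)
    (h2 : Integrable (fun ω => f ω ^ 2 + g ω ^ 2) π) :
    ∫ ω, f ω * g ω ∂π
      = (∫⁻ ω, ENNReal.ofReal (f ω) * ENNReal.ofReal (g ω) ∂π).toReal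
        + (∫⁻ ω, ENNReal.ofReal (-f ω) * ENNReal.ofReal (-g ω) ∂π).toReal
        - (∫⁻ ω, ENNReal.ofReal (f ω) * ENNReal.ofReal (-g ω) ∂π).toReal
        - (∫⁻ ω, ENNReal.ofReal (-f ω) * ENNReal.ofReal (g ω) ∂π).toReal := by
  have hbound : ∀ (a b : ℝ), |max a 0 * max b 0| ≤ ‖a ^ 2 + b ^ 2‖ := by
    intro a b
    have h1 : (0:ℝ) ≤ max a 0 * max b 0 := mul_nonneg (le_max_right _ _) (le_max_right _ _)
    rw [abs_of_nonneg h1, Real.norm_eq_abs, abs_of_nonneg (by positivity)]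
    exact max_mul_max_le_sq a b
  have hint : ∀ (f' g' : Ω → ℝ), Measurable f' → Measurable g' →
      (∀ ω, f' ω ^ 2 + g' ω ^ 2 = f ω ^ 2 + g ω ^ 2) →
      Integrable (fun ω => max (f' ω) 0 * max (g' ω) 0) π := by
    intro f' g' hf' hg' hsq
    apply h2.mono ((hf'.max measurable_const).mul (hg'.max measurable_const)).aestronglyMeasurable
    refine Filter.Eventually.of_forall (fun ω => ?_)
    rw [Real.norm_eq_abs]
    calc |max (f' ω) 0 * max (g' ω) 0| ≤ ‖f' ω ^ 2 + g' ω ^ 2‖ := hbound _ _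
    _ = ‖f ω ^ 2 + g ω ^ 2‖ := by rw [hsq]
  have i1 := hint f g hf hg (fun _ => rfl)
  have i2 := hint (fun ω => -f ω) (fun ω => -g ω) hf.neg hg.neg (fun ω => by ring)
  have i3 := hint f (fun ω => -g ω) hf hg.neg (fun ω => by ring)
  have i4 := hint (fun ω => -f ω) g hf.neg hg (fun ω => by ring)
  have hiden : (fun ω => f ω * g ω) = (fun ω =>
      max (f ω) 0 * max (g ω) 0 + max (-f ω) 0 * max (-g ω) 0
      - max (f ω) 0 * max (-g ω) 0 - max (-f ω) 0 * max (g ω) 0) := by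
    funext ω
    have ha := max_zero_sub_max_neg_zero_eq_self (f ω)
    have hb := max_zero_sub_max_neg_zero_eq_self (g ω)
    calc f ω * g ω = (max (f ω) 0 - max (-f ω) 0) * (max (g ω) 0 - max (-g ω) 0) := by
          rw [ha, hb]
    _ = _ := by ring
  have heq : ∀ (f' g' : Ω → ℝ), Measurable f' → Measurable g' →
      ∫ ω, max (f' ω) 0 * max (g' ω) 0 ∂π
        = (∫⁻ ω, ENNReal.ofReal (f' ω) * ENNReal.ofReal (g' ω) ∂π).toReal := by
    intro f' g' hf' hg'
    rw [integral_eq_lintegral_of_nonneg_ae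
      (Filter.Eventually.of_forall fun ω =>
        mul_nonneg (le_max_right _ _) (le_max_right _ _))
      ((hf'.max measurable_const).mul (hg'.max measurable_const)).aestronglyMeasurable]
    congr 1
    apply lintegral_congr
    intro ω
    rw [ENNReal.ofReal_mul (le_max_right _ _), ofReal_max_zero, ofReal_max_zero]
  have i12 : Integrable (fun ω => max (f ω) 0 * max (g ω) 0 + max (-f ω) 0 * max (-g ω) 0) π :=
    i1.add i2
  have i123 : Integrable (fun ω => max (f ω) 0 * max (g ω) 0 + max (-f ω) 0 * max (-g ω) 0
      - max (f ω) 0 * max (-g ω) 0) π := i12.sub i3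
  have e1 := integral_sub i123 i4
  have e2 := integral_sub i12 i3
  have e3 := integral_add i1 i2
  rw [hiden, e1, e2, e3,
    heq f g hf hg, heq (fun ω => -f ω) (fun ω => -g ω) hf.neg hg.neg, heq f (fun ω => -g ω) hf hg.neg,
    heq (fun ω => -f ω) g hf.neg hg]

section coupling

variable {μ ν : Measure ℝ} [IsProbabilityMeasure μ] [IsProbabilityMeasure ν]
  {π : Measure (ℝ × ℝ)}

lemma coupling_prob (hc : IsCoupling π μ ν) : IsProbabilityMeasure π := by
  constructor
  rw [← Set.preimage_univ (f := @Prod.fst ℝ ℝ), ← Measure.fst_apply MeasurableSet.univ, hc.1]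
  exact measure_univ

lemma marg1_apply (hc : IsCoupling π μ ν) {s : Set ℝ} (hs : MeasurableSet s) :
    π {ω : ℝ × ℝ | ω.1 ∈ s} = μ s := by
  rw [← hc.1, Measure.fst_apply hs]; rfl

lemma marg2_apply (hc : IsCoupling π μ ν) {s : Set ℝ} (hs : MeasurableSet s) :
    π {ω : ℝ × ℝ | ω.2 ∈ s} = ν s := by
  rw [← hc.2, Measure.snd_apply hs]; rfl

lemma prob_Ioi (s : ℝ) : μ (Set.Ioi s) = ENNReal.ofReal (1 - cdf μ s) := by
  have h1 : Set.Ioi s = (Set.Iic s)ᶜ := by simp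
  rw [h1, measure_compl measurableSet_Iic (measure_ne_top μ _), measure_univ, ← ofReal_cdf,
    ENNReal.ofReal_sub 1 (cdf_nonneg μ s), ENNReal.ofReal_one]

lemma qf_gt_iff {r : ℝ} (hr : r ∈ Set.Ioo (0:ℝ) 1) (s : ℝ) :
    s < qf μ r ↔ cdf μ s < r := by
  rw [← not_le, ← not_le, qf_le_iff hr]

end coupling

section coupling2

variable {μ ν : Measure ℝ} [IsProbabilityMeasure μ] [IsProbabilityMeasure ν]
  {π : Measure (ℝ × ℝ)}

lemma unitMeasure_apply (S : Set ℝ) : unitMeasure S = volume (S ∩ Set.Ioo 0 1) :=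
  Measure.restrict_apply' measurableSet_Ioo

lemma vol_gt_inter_Iic {a b : ℝ} (ha : 0 ≤ a) (hb : b ≤ 1) :
    volume ({r : ℝ | a < r ∧ r ≤ b} ∩ Set.Ioo 0 1) = ENNReal.ofReal (b - a) := by
  rcases le_or_gt b a with h | h
  · have : {r : ℝ | a < r ∧ r ≤ b} ∩ Set.Ioo 0 1 = ∅ := by
      ext r
      simp only [Set.mem_inter_iff, Set.mem_setOf_eq, Set.mem_Ioo, Set.mem_empty_iff_false,
        iff_false]
      rintro ⟨⟨h1, h2⟩, -⟩
      exact absurd (h2.trans h) (not_le.mpr h1)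
    rw [this, measure_empty, ENNReal.ofReal_of_nonpos (by linarith)]
  · rcases lt_or_ge b 1 with hb1 | hb1
    · have : {r : ℝ | a < r ∧ r ≤ b} ∩ Set.Ioo 0 1 = Set.Ioc a b := by
        ext r
        simp only [Set.mem_inter_iff, Set.mem_setOf_eq, Set.mem_Ioo, Set.mem_Ioc]
        constructor
        · rintro ⟨⟨h1, h2⟩, -⟩; exact ⟨h1, h2⟩
        · rintro ⟨h1, h2⟩
          exact ⟨⟨h1, h2⟩, lt_of_le_of_lt ha h1, lt_of_le_of_lt h2 hb1⟩
      rw [this, Real.volume_Ioc]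
    · have hb1' : b = 1 := le_antisymm hb hb1
      subst hb1'
      have : {r : ℝ | a < r ∧ r ≤ 1} ∩ Set.Ioo 0 1 = Set.Ioo a 1 := by
        ext r
        simp only [Set.mem_inter_iff, Set.mem_setOf_eq, Set.mem_Ioo]
        constructor
        · rintro ⟨⟨h1, -⟩, ⟨-, h3⟩⟩; exact ⟨h1, h3⟩
        · rintro ⟨h1, h2⟩; exact ⟨⟨h1, h2.le⟩, lt_of_le_of_lt ha h1, h2⟩
      rw [this, Real.volume_Ioo]

lemma ofReal_min' (a b : ℝ) :
    ENNReal.ofReal (min a b) = min (ENNReal.ofReal a) (ENNReal.ofReal b) := by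
  rcases le_total a b with h | h
  · rw [min_eq_left h, min_eq_left (ENNReal.ofReal_le_ofReal h)]
  · rw [min_eq_right h, min_eq_right (ENNReal.ofReal_le_ofReal h)]

lemma pt_pp (hc : IsCoupling π μ ν) (q : ℝ × ℝ) :
    π {ω : ℝ × ℝ | q.1 ∈ Set.Ioo 0 ω.1 ∧ q.2 ∈ Set.Ioo 0 ω.2}
      ≤ unitMeasure {r : ℝ | q.1 ∈ Set.Ioo 0 (qf μ r) ∧ q.2 ∈ Set.Ioo 0 (qf ν r)} := by
  obtain ⟨s, t⟩ := q
  by_cases hs : 0 < s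
  · by_cases ht : 0 < t
    · -- main case
      set a := cdf μ s with ha
      set b := cdf ν t with hb
      have hRHS : unitMeasure {r : ℝ | s ∈ Set.Ioo 0 (qf μ r) ∧ t ∈ Set.Ioo 0 (qf ν r)}
          = ENNReal.ofReal (1 - max a b) := by
        rw [unitMeasure_apply]
        have hset : {r : ℝ | s ∈ Set.Ioo 0 (qf μ r) ∧ t ∈ Set.Ioo 0 (qf ν r)} ∩ Set.Ioo 0 1
            = Set.Ioo (max a b) 1 := by
          ext r
          simp only [Set.mem_inter_iff, Set.mem_setOf_eq, Set.mem_Ioo]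
          constructor
          · rintro ⟨⟨⟨-, h1⟩, ⟨-, h2⟩⟩, hr⟩
            exact ⟨max_lt ((qf_gt_iff hr s).mp h1) ((qf_gt_iff hr t).mp h2), hr.2⟩
          · rintro ⟨h1, h2⟩
            have hr : r ∈ Set.Ioo (0:ℝ) 1 :=
              ⟨lt_of_le_of_lt (le_trans (cdf_nonneg μ s) (le_max_left a b)) h1, h2⟩
            exact ⟨⟨⟨hs, (qf_gt_iff hr s).mpr (lt_of_le_of_lt (le_max_left a b) h1)⟩,
              ⟨ht, (qf_gt_iff hr t).mpr (lt_of_le_of_lt (le_max_right a b) h1)⟩⟩, hr⟩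
        rw [hset, Real.volume_Ioo]
      rw [hRHS]
      have hmin : ENNReal.ofReal (1 - max a b)
          = min (ENNReal.ofReal (1 - a)) (ENNReal.ofReal (1 - b)) := by
        rw [← ofReal_min']
        congr 1
        rcases le_total a b with h | h
        · rw [max_eq_right h, min_eq_right (by linarith)]
        · rw [max_eq_left h, min_eq_left (by linarith)]
      rw [hmin]
      refine le_min ?_ ?_
      · calc π {ω : ℝ × ℝ | (s, t).1 ∈ Set.Ioo 0 ω.1 ∧ (s, t).2 ∈ Set.Ioo 0 ω.2}
            ≤ π {ω : ℝ × ℝ | ω.1 ∈ Set.Ioi s} := measure_mono (fun ω hω => hω.1.2)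
        _ = ENNReal.ofReal (1 - a) := by rw [marg1_apply hc measurableSet_Ioi, prob_Ioi]
      · calc π {ω : ℝ × ℝ | (s, t).1 ∈ Set.Ioo 0 ω.1 ∧ (s, t).2 ∈ Set.Ioo 0 ω.2}
            ≤ π {ω : ℝ × ℝ | ω.2 ∈ Set.Ioi t} := measure_mono (fun ω hω => hω.2.2)
        _ = ENNReal.ofReal (1 - b) := by rw [marg2_apply hc measurableSet_Ioi, prob_Ioi]
    · have : {ω : ℝ × ℝ | s ∈ Set.Ioo 0 ω.1 ∧ t ∈ Set.Ioo 0 ω.2} = ∅ := by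
        ext ω; simp only [Set.mem_setOf_eq, Set.mem_Ioo, Set.mem_empty_iff_false, iff_false]
        rintro ⟨-, ht', -⟩; exact ht ht'
      rw [this, measure_empty]; exact zero_le
  · have : {ω : ℝ × ℝ | s ∈ Set.Ioo 0 ω.1 ∧ t ∈ Set.Ioo 0 ω.2} = ∅ := by
      ext ω; simp only [Set.mem_setOf_eq, Set.mem_Ioo, Set.mem_empty_iff_false, iff_false]
      rintro ⟨⟨hs', -⟩, -⟩; exact hs hs'
    rw [this, measure_empty]; exact zero_le

lemma mem_Ioc_neg {s x : ℝ} : s ∈ Set.Ioc 0 (-x) ↔ 0 < s ∧ x ≤ -s := by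
  rw [Set.mem_Ioc, le_neg]

lemma pt_mm (hc : IsCoupling π μ ν) (q : ℝ × ℝ) :
    π {ω : ℝ × ℝ | q.1 ∈ Set.Ioc 0 (-ω.1) ∧ q.2 ∈ Set.Ioc 0 (-ω.2)}
      ≤ unitMeasure {r : ℝ | q.1 ∈ Set.Ioc 0 (-qf μ r) ∧ q.2 ∈ Set.Ioc 0 (-qf ν r)} := by
  obtain ⟨s, t⟩ := q
  by_cases hs : 0 < s
  · by_cases ht : 0 < t
    · set a := cdf μ (-s) with ha
      set b := cdf ν (-t) with hb
      have hRHS : unitMeasure {r : ℝ | s ∈ Set.Ioc 0 (-qf μ r) ∧ t ∈ Set.Ioc 0 (-qf ν r)}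
          = ENNReal.ofReal (min a b) := by
        rw [unitMeasure_apply]
        have hset : {r : ℝ | s ∈ Set.Ioc 0 (-qf μ r) ∧ t ∈ Set.Ioc 0 (-qf ν r)} ∩ Set.Ioo 0 1
            = Set.Ioo (0:ℝ) 1 ∩ Set.Iic (min a b) := by
          ext r
          simp only [Set.mem_inter_iff, Set.mem_setOf_eq, mem_Ioc_neg, Set.mem_Iic]
          constructor
          · rintro ⟨⟨⟨-, h1⟩, ⟨-, h2⟩⟩, hr⟩
            exact ⟨hr, le_min ((qf_le_iff hr (-s)).mp h1) ((qf_le_iff hr (-t)).mp h2)⟩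
          · rintro ⟨hr, h1⟩
            exact ⟨⟨⟨hs, (qf_le_iff hr (-s)).mpr (le_trans h1 (min_le_left a b))⟩,
              ⟨ht, (qf_le_iff hr (-t)).mpr (le_trans h1 (min_le_right a b))⟩⟩, hr⟩
        rw [hset, vol_Ioo_inter_Iic (le_min (cdf_nonneg μ _) (cdf_nonneg ν _))
          (le_trans (min_le_left a b) (cdf_le_one μ _))]
      rw [hRHS, ofReal_min']
      refine le_min ?_ ?_
      · calc π {ω : ℝ × ℝ | (s, t).1 ∈ Set.Ioc 0 (-ω.1) ∧ (s, t).2 ∈ Set.Ioc 0 (-ω.2)}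
            ≤ π {ω : ℝ × ℝ | ω.1 ∈ Set.Iic (-s)} :=
              measure_mono (fun ω hω => le_neg.mp (Set.mem_Ioc.mp hω.1).2)
        _ = ENNReal.ofReal a := by rw [marg1_apply hc measurableSet_Iic, ← ofReal_cdf]
      · calc π {ω : ℝ × ℝ | (s, t).1 ∈ Set.Ioc 0 (-ω.1) ∧ (s, t).2 ∈ Set.Ioc 0 (-ω.2)}
            ≤ π {ω : ℝ × ℝ | ω.2 ∈ Set.Iic (-t)} :=
              measure_mono (fun ω hω => le_neg.mp (Set.mem_Ioc.mp hω.2).2)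
        _ = ENNReal.ofReal b := by rw [marg2_apply hc measurableSet_Iic, ← ofReal_cdf]
    · have : {ω : ℝ × ℝ | s ∈ Set.Ioc 0 (-ω.1) ∧ t ∈ Set.Ioc 0 (-ω.2)} = ∅ := by
        ext ω; simp only [Set.mem_setOf_eq, Set.mem_Ioc, Set.mem_empty_iff_false, iff_false]
        rintro ⟨-, ht', -⟩; exact ht ht'
      rw [this, measure_empty]; exact zero_le
  · have : {ω : ℝ × ℝ | s ∈ Set.Ioc 0 (-ω.1) ∧ t ∈ Set.Ioc 0 (-ω.2)} = ∅ := by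
      ext ω; simp only [Set.mem_setOf_eq, Set.mem_Ioc, Set.mem_empty_iff_false, iff_false]
      rintro ⟨⟨hs', -⟩, -⟩; exact hs hs'
    rw [this, measure_empty]; exact zero_le

lemma pt_pm (hc : IsCoupling π μ ν) (q : ℝ × ℝ) :
    unitMeasure {r : ℝ | q.1 ∈ Set.Ioo 0 (qf μ r) ∧ q.2 ∈ Set.Ioc 0 (-qf ν r)}
      ≤ π {ω : ℝ × ℝ | q.1 ∈ Set.Ioo 0 ω.1 ∧ q.2 ∈ Set.Ioc 0 (-ω.2)} := by
  obtain ⟨s, t⟩ := q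
  by_cases hs : 0 < s
  · by_cases ht : 0 < t
    · set a := cdf μ s with ha
      set b := cdf ν (-t) with hb
      have hLHS : unitMeasure {r : ℝ | s ∈ Set.Ioo 0 (qf μ r) ∧ t ∈ Set.Ioc 0 (-qf ν r)}
          = ENNReal.ofReal (b - a) := by
        rw [unitMeasure_apply]
        have hset : {r : ℝ | s ∈ Set.Ioo 0 (qf μ r) ∧ t ∈ Set.Ioc 0 (-qf ν r)} ∩ Set.Ioo 0 1
            = {r : ℝ | a < r ∧ r ≤ b} ∩ Set.Ioo 0 1 := by
          ext r
          simp only [Set.mem_inter_iff, Set.mem_setOf_eq, Set.mem_Ioo, mem_Ioc_neg]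
          constructor
          · rintro ⟨⟨⟨-, h1⟩, ⟨-, h2⟩⟩, hr⟩
            exact ⟨⟨(qf_gt_iff ⟨hr.1, hr.2⟩ s).mp h1, (qf_le_iff ⟨hr.1, hr.2⟩ (-t)).mp h2⟩, hr⟩
          · rintro ⟨⟨h1, h2⟩, hr⟩
            exact ⟨⟨⟨hs, (qf_gt_iff hr s).mpr h1⟩, ⟨ht, (qf_le_iff hr (-t)).mpr h2⟩⟩, hr⟩
        rw [hset, vol_gt_inter_Iic (cdf_nonneg μ s) (cdf_le_one ν _)]
      rw [hLHS, ENNReal.ofReal_sub _ (cdf_nonneg μ s), ofReal_cdf, ofReal_cdf]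
      rw [tsub_le_iff_right]
      have hcover : {ω : ℝ × ℝ | ω.2 ∈ Set.Iic (-t)}
          ⊆ {ω : ℝ × ℝ | s ∈ Set.Ioo 0 ω.1 ∧ t ∈ Set.Ioc 0 (-ω.2)}
            ∪ {ω : ℝ × ℝ | ω.1 ∈ Set.Iic s} := by
        intro ω hω
        simp only [Set.mem_setOf_eq, Set.mem_Iic] at hω
        by_cases h1 : s < ω.1
        · exact Or.inl ⟨⟨hs, h1⟩, mem_Ioc_neg.mpr ⟨ht, hω⟩⟩
        · exact Or.inr (not_lt.mp h1)
      calc ν (Set.Iic (-t)) = π {ω : ℝ × ℝ | ω.2 ∈ Set.Iic (-t)} :=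
            (marg2_apply hc measurableSet_Iic).symm
      _ ≤ π ({ω : ℝ × ℝ | s ∈ Set.Ioo 0 ω.1 ∧ t ∈ Set.Ioc 0 (-ω.2)}
            ∪ {ω : ℝ × ℝ | ω.1 ∈ Set.Iic s}) := measure_mono hcover
      _ ≤ π {ω : ℝ × ℝ | s ∈ Set.Ioo 0 ω.1 ∧ t ∈ Set.Ioc 0 (-ω.2)}
            + π {ω : ℝ × ℝ | ω.1 ∈ Set.Iic s} := measure_union_le _ _
      _ = _ := by rw [marg1_apply hc measurableSet_Iic]
    · have : {r : ℝ | s ∈ Set.Ioo 0 (qf μ r) ∧ t ∈ Set.Ioc 0 (-qf ν r)} = ∅ := by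
        ext r; simp only [Set.mem_setOf_eq, Set.mem_Ioc, Set.mem_empty_iff_false, iff_false]
        rintro ⟨-, ht', -⟩; exact ht ht'
      rw [this, measure_empty]; exact zero_le
  · have : {r : ℝ | s ∈ Set.Ioo 0 (qf μ r) ∧ t ∈ Set.Ioc 0 (-qf ν r)} = ∅ := by
      ext r; simp only [Set.mem_setOf_eq, Set.mem_Ioo, Set.mem_empty_iff_false, iff_false]
      rintro ⟨⟨hs', -⟩, -⟩; exact hs hs'
    rw [this, measure_empty]; exact zero_le

lemma pt_mp (hc : IsCoupling π μ ν) (q : ℝ × ℝ) :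
    unitMeasure {r : ℝ | q.1 ∈ Set.Ioc 0 (-qf μ r) ∧ q.2 ∈ Set.Ioo 0 (qf ν r)}
      ≤ π {ω : ℝ × ℝ | q.1 ∈ Set.Ioc 0 (-ω.1) ∧ q.2 ∈ Set.Ioo 0 ω.2} := by
  obtain ⟨s, t⟩ := q
  by_cases hs : 0 < s
  · by_cases ht : 0 < t
    · set a := cdf μ (-s) with ha
      set b := cdf ν t with hb
      have hLHS : unitMeasure {r : ℝ | s ∈ Set.Ioc 0 (-qf μ r) ∧ t ∈ Set.Ioo 0 (qf ν r)}
          = ENNReal.ofReal (a - b) := by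
        rw [unitMeasure_apply]
        have hset : {r : ℝ | s ∈ Set.Ioc 0 (-qf μ r) ∧ t ∈ Set.Ioo 0 (qf ν r)} ∩ Set.Ioo 0 1
            = {r : ℝ | b < r ∧ r ≤ a} ∩ Set.Ioo 0 1 := by
          ext r
          simp only [Set.mem_inter_iff, Set.mem_setOf_eq, Set.mem_Ioo, mem_Ioc_neg]
          constructor
          · rintro ⟨⟨⟨-, h1⟩, ⟨-, h2⟩⟩, hr⟩
            exact ⟨⟨(qf_gt_iff ⟨hr.1, hr.2⟩ t).mp h2, (qf_le_iff ⟨hr.1, hr.2⟩ (-s)).mp h1⟩, hr⟩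
          · rintro ⟨⟨h1, h2⟩, hr⟩
            exact ⟨⟨⟨hs, (qf_le_iff hr (-s)).mpr h2⟩, ⟨ht, (qf_gt_iff hr t).mpr h1⟩⟩, hr⟩
        rw [hset, vol_gt_inter_Iic (cdf_nonneg ν t) (cdf_le_one μ _)]
      rw [hLHS, ENNReal.ofReal_sub _ (cdf_nonneg ν t), ofReal_cdf, ofReal_cdf]
      rw [tsub_le_iff_right]
      have hcover : {ω : ℝ × ℝ | ω.1 ∈ Set.Iic (-s)}
          ⊆ {ω : ℝ × ℝ | s ∈ Set.Ioc 0 (-ω.1) ∧ t ∈ Set.Ioo 0 ω.2}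
            ∪ {ω : ℝ × ℝ | ω.2 ∈ Set.Iic t} := by
        intro ω hω
        simp only [Set.mem_setOf_eq, Set.mem_Iic] at hω
        by_cases h1 : t < ω.2
        · exact Or.inl ⟨mem_Ioc_neg.mpr ⟨hs, hω⟩, ⟨ht, h1⟩⟩
        · exact Or.inr (not_lt.mp h1)
      calc μ (Set.Iic (-s)) = π {ω : ℝ × ℝ | ω.1 ∈ Set.Iic (-s)} :=
            (marg1_apply hc measurableSet_Iic).symm
      _ ≤ π ({ω : ℝ × ℝ | s ∈ Set.Ioc 0 (-ω.1) ∧ t ∈ Set.Ioo 0 ω.2}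
            ∪ {ω : ℝ × ℝ | ω.2 ∈ Set.Iic t}) := measure_mono hcover
      _ ≤ π {ω : ℝ × ℝ | s ∈ Set.Ioc 0 (-ω.1) ∧ t ∈ Set.Ioo 0 ω.2}
            + π {ω : ℝ × ℝ | ω.2 ∈ Set.Iic t} := measure_union_le _ _
      _ = _ := by rw [marg2_apply hc measurableSet_Iic]
    · have : {r : ℝ | s ∈ Set.Ioc 0 (-qf μ r) ∧ t ∈ Set.Ioo 0 (qf ν r)} = ∅ := by
        ext r; simp only [Set.mem_setOf_eq, Set.mem_Ioo, Set.mem_empty_iff_false, iff_false]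
        rintro ⟨-, ht', -⟩; exact ht ht'
      rw [this, measure_empty]; exact zero_le
  · have : {r : ℝ | s ∈ Set.Ioc 0 (-qf μ r) ∧ t ∈ Set.Ioo 0 (qf ν r)} = ∅ := by
      ext r; simp only [Set.mem_setOf_eq, Set.mem_Ioc, Set.mem_empty_iff_false, iff_false]
      rintro ⟨⟨hs', -⟩, -⟩; exact hs hs'
    rw [this, measure_empty]; exact zero_le


lemma hIoo_vol : ∀ x : ℝ, volume (Set.Ioo 0 x) = ENNReal.ofReal x := by
  intro x; rw [Real.volume_Ioo, sub_zero]

lemma hIoc_vol : ∀ x : ℝ, volume (Set.Ioc 0 x) = ENNReal.ofReal x := by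
  intro x; rw [Real.volume_Ioc, sub_zero]

lemma mIoo {Ω : Type*} [MeasurableSpace Ω] {f : Ω → ℝ} (hf : Measurable f) :
    MeasurableSet {p : Ω × ℝ | p.2 ∈ Set.Ioo 0 (f p.1)} :=
  (measurableSet_lt measurable_const measurable_snd).inter
    (measurableSet_lt measurable_snd (hf.comp measurable_fst))

lemma mIoc {Ω : Type*} [MeasurableSpace Ω] {f : Ω → ℝ} (hf : Measurable f) :
    MeasurableSet {p : Ω × ℝ | p.2 ∈ Set.Ioc 0 (f p.1)} :=
  (measurableSet_lt measurable_const measurable_snd).inter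
    (measurableSet_le measurable_snd (hf.comp measurable_fst))

lemma integrable_mul_of_sq {Ω : Type*} [MeasurableSpace Ω] {π : Measure Ω} {f g : Ω → ℝ}
    (hm : AEStronglyMeasurable (fun ω => f ω * g ω) π)
    (h2 : Integrable (fun ω => f ω ^ 2 + g ω ^ 2) π) :
    Integrable (fun ω => f ω * g ω) π := by
  apply h2.mono hm
  refine Filter.Eventually.of_forall (fun ω => ?_)
  rw [Real.norm_eq_abs, Real.norm_eq_abs, abs_of_nonneg (by positivity : (0:ℝ) ≤ f ω ^ 2 + g ω ^ 2), abs_mul]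
  nlinarith [sq_nonneg (|f ω| - |g ω|), abs_nonneg (f ω), abs_nonneg (g ω),
    sq_abs (f ω), sq_abs (g ω)]

lemma integrable_sq_fst (hc : IsCoupling π μ ν) (hμ2 : Integrable (fun x : ℝ => x ^ 2) μ) :
    Integrable (fun ω : ℝ × ℝ => ω.1 ^ 2) π := by
  have h1 : Integrable (fun x : ℝ => x ^ 2) π.fst := by rw [hc.1]; exact hμ2
  rw [Measure.fst] at h1
  exact (integrable_map_measure (by fun_prop) measurable_fst.aemeasurable).mp h1

lemma integrable_sq_snd (hc : IsCoupling π μ ν) (hν2 : Integrable (fun x : ℝ => x ^ 2) ν) :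
    Integrable (fun ω : ℝ × ℝ => ω.2 ^ 2) π := by
  have h1 : Integrable (fun x : ℝ => x ^ 2) π.snd := by rw [hc.2]; exact hν2
  rw [Measure.snd] at h1
  exact (integrable_map_measure (by fun_prop) measurable_snd.aemeasurable).mp h1

lemma integral_mul_le (hμ2 : Integrable (fun x : ℝ => x ^ 2) μ)
    (hν2 : Integrable (fun x : ℝ => x ^ 2) ν) (hc : IsCoupling π μ ν) :
    ∫ ω, ω.1 * ω.2 ∂π ≤ ∫ r, qf μ r * qf ν r ∂unitMeasure := by
  haveI := coupling_prob hc
  have hx2 := integrable_sq_fst hc hμ2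
  have hy2 := integrable_sq_snd hc hν2
  have hsum : Integrable (fun ω : ℝ × ℝ => ω.1 ^ 2 + ω.2 ^ 2) π := hx2.add hy2
  have hq2 : Integrable (fun r => qf μ r ^ 2 + qf ν r ^ 2) unitMeasure :=
    ((memℒp_qf ⟨inferInstance, hμ2⟩).integrable_sq).add
      ((memℒp_qf ⟨inferInstance, hν2⟩).integrable_sq)
  have hsumB : Integrable (fun ω : ℝ × ℝ => ω.1 ^ 2 + (-ω.2) ^ 2) π := by
    have e : (fun ω : ℝ × ℝ => ω.1 ^ 2 + (-ω.2) ^ 2) = fun ω : ℝ × ℝ => ω.1 ^ 2 + ω.2 ^ 2 := by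
      funext ω; ring
    rw [e]; exact hsum
  have hsumC : Integrable (fun ω : ℝ × ℝ => (-ω.1) ^ 2 + ω.2 ^ 2) π := by
    have e : (fun ω : ℝ × ℝ => (-ω.1) ^ 2 + ω.2 ^ 2) = fun ω : ℝ × ℝ => ω.1 ^ 2 + ω.2 ^ 2 := by
      funext ω; ring
    rw [e]; exact hsum
  have hq2B : Integrable (fun r => (-qf μ r) ^ 2 + (-qf ν r) ^ 2) unitMeasure := by
    have e : (fun r => (-qf μ r) ^ 2 + (-qf ν r) ^ 2) = fun r => qf μ r ^ 2 + qf ν r ^ 2 := by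
      funext r; ring
    rw [e]; exact hq2
  have dpi := integral_mul_decomp π (fun ω => ω.1) (fun ω => ω.2)
    measurable_fst measurable_snd hsum
  have dlam := integral_mul_decomp unitMeasure (qf μ) (qf ν) measurable_qf measurable_qf hq2
  have c1 : ∫⁻ ω, ENNReal.ofReal ω.1 * ENNReal.ofReal ω.2 ∂π
      ≤ ∫⁻ r, ENNReal.ofReal (qf μ r) * ENNReal.ofReal (qf ν r) ∂unitMeasure := by
    rw [layercake_general π (fun ω => ω.1) (fun ω => ω.2) (fun x => Set.Ioo 0 x)
        (fun x => Set.Ioo 0 x) hIoo_vol hIoo_vol (mIoo measurable_fst) (mIoo measurable_snd),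
      layercake_general unitMeasure (qf μ) (qf ν) (fun x => Set.Ioo 0 x)
        (fun x => Set.Ioo 0 x) hIoo_vol hIoo_vol (mIoo measurable_qf) (mIoo measurable_qf)]
    exact lintegral_mono (pt_pp hc)
  have c2 : ∫⁻ ω, ENNReal.ofReal (-ω.1) * ENNReal.ofReal (-ω.2) ∂π
      ≤ ∫⁻ r, ENNReal.ofReal (-qf μ r) * ENNReal.ofReal (-qf ν r) ∂unitMeasure := by
    rw [layercake_general π (fun ω => -ω.1) (fun ω => -ω.2) (fun x => Set.Ioc 0 x)
        (fun x => Set.Ioc 0 x) hIoc_vol hIoc_vol (mIoc measurable_fst.neg)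
        (mIoc measurable_snd.neg),
      layercake_general unitMeasure (fun r => -qf μ r) (fun r => -qf ν r)
        (fun x => Set.Ioc 0 x) (fun x => Set.Ioc 0 x) hIoc_vol hIoc_vol
        (mIoc measurable_qf.neg) (mIoc measurable_qf.neg)]
    exact lintegral_mono (pt_mm hc)
  have c3 : ∫⁻ r, ENNReal.ofReal (qf μ r) * ENNReal.ofReal (-qf ν r) ∂unitMeasure
      ≤ ∫⁻ ω, ENNReal.ofReal ω.1 * ENNReal.ofReal (-ω.2) ∂π := by
    rw [layercake_general π (fun ω => ω.1) (fun ω => -ω.2) (fun x => Set.Ioo 0 x)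
        (fun x => Set.Ioc 0 x) hIoo_vol hIoc_vol (mIoo measurable_fst)
        (mIoc measurable_snd.neg),
      layercake_general unitMeasure (qf μ) (fun r => -qf ν r) (fun x => Set.Ioo 0 x)
        (fun x => Set.Ioc 0 x) hIoo_vol hIoc_vol (mIoo measurable_qf)
        (mIoc measurable_qf.neg)]
    exact lintegral_mono (pt_pm hc)
  have c4 : ∫⁻ r, ENNReal.ofReal (-qf μ r) * ENNReal.ofReal (qf ν r) ∂unitMeasure
      ≤ ∫⁻ ω, ENNReal.ofReal (-ω.1) * ENNReal.ofReal ω.2 ∂π := by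
    rw [layercake_general π (fun ω => -ω.1) (fun ω => ω.2) (fun x => Set.Ioc 0 x)
        (fun x => Set.Ioo 0 x) hIoc_vol hIoo_vol (mIoc measurable_fst.neg)
        (mIoo measurable_snd),
      layercake_general unitMeasure (fun r => -qf μ r) (qf ν) (fun x => Set.Ioc 0 x)
        (fun x => Set.Ioo 0 x) hIoc_vol hIoo_vol (mIoc measurable_qf.neg)
        (mIoo measurable_qf)]
    exact lintegral_mono (pt_mp hc)
  have f1 := lint_mul_ne_top unitMeasure (qf μ) (qf ν) hq2
  have f2 := lint_mul_ne_top unitMeasure (fun r => -qf μ r) (fun r => -qf ν r) hq2B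
  have f3 := lint_mul_ne_top π (fun ω => ω.1) (fun ω => -ω.2) hsumB
  have f4 := lint_mul_ne_top π (fun ω => -ω.1) (fun ω => ω.2) hsumC
  rw [dpi, dlam]
  have t1 := ENNReal.toReal_mono f1 c1
  have t2 := ENNReal.toReal_mono f2 c2
  have t3 := ENNReal.toReal_mono f3 c3
  have t4 := ENNReal.toReal_mono f4 c4
  linarith

lemma cost_comparison (hμ2 : Integrable (fun x : ℝ => x ^ 2) μ)
    (hν2 : Integrable (fun x : ℝ => x ^ 2) ν) (hc : IsCoupling π μ ν) :
    ∫ r, (qf μ r - qf ν r) ^ 2 ∂unitMeasure ≤ ∫ ω, (ω.1 - ω.2) ^ 2 ∂π := by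
  haveI := coupling_prob hc
  have hx2 := integrable_sq_fst hc hμ2
  have hy2 := integrable_sq_snd hc hν2
  have hqμ2 : Integrable (fun r => qf μ r ^ 2) unitMeasure :=
    (memℒp_qf ⟨inferInstance, hμ2⟩).integrable_sq
  have hqν2 : Integrable (fun r => qf ν r ^ 2) unitMeasure :=
    (memℒp_qf ⟨inferInstance, hν2⟩).integrable_sq
  have hxy : Integrable (fun ω : ℝ × ℝ => ω.1 * ω.2) π :=
    integrable_mul_of_sq (measurable_fst.mul measurable_snd).aestronglyMeasurable (hx2.add hy2)
  have hq : Integrable (fun r => qf μ r * qf ν r) unitMeasure :=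
    integrable_mul_of_sq ((measurable_qf (μ := μ)).mul measurable_qf).aestronglyMeasurable
      (hqμ2.add hqν2)
  have m1 : ∫ x, x ^ 2 ∂μ = ∫ ω, (ω.1 : ℝ) ^ 2 ∂π := by
    rw [← hc.1, Measure.fst, integral_map measurable_fst.aemeasurable (by fun_prop)]
  have m2 : ∫ x, x ^ 2 ∂ν = ∫ ω, (ω.2 : ℝ) ^ 2 ∂π := by
    rw [← hc.2, Measure.snd, integral_map measurable_snd.aemeasurable (by fun_prop)]
  have mq1 : ∫ x, x ^ 2 ∂μ = ∫ r, qf μ r ^ 2 ∂unitMeasure := by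
    conv_lhs => rw [← map_qf (μ := μ)]
    rw [integral_map measurable_qf.aemeasurable (by fun_prop)]
  have mq2 : ∫ x, x ^ 2 ∂ν = ∫ r, qf ν r ^ 2 ∂unitMeasure := by
    conv_lhs => rw [← map_qf (μ := ν)]
    rw [integral_map measurable_qf.aemeasurable (by fun_prop)]
  have epi : ∫ ω, (ω.1 - ω.2) ^ 2 ∂π
      = ∫ ω, (ω.1 : ℝ) ^ 2 ∂π + ∫ ω, (ω.2 : ℝ) ^ 2 ∂π - 2 * ∫ ω, ω.1 * ω.2 ∂π := by
    rw [show (fun ω : ℝ × ℝ => (ω.1 - ω.2) ^ 2)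
        = fun ω : ℝ × ℝ => (ω.1 ^ 2 + ω.2 ^ 2) - 2 * (ω.1 * ω.2) from funext fun ω => by ring]
    have i12 : Integrable (fun ω : ℝ × ℝ => ω.1 ^ 2 + ω.2 ^ 2) π := hx2.add hy2
    have e1 := integral_sub i12 (hxy.const_mul 2)
    have e2 := integral_add hx2 hy2
    rw [e1, e2, integral_const_mul]
  have elam : ∫ r, (qf μ r - qf ν r) ^ 2 ∂unitMeasure
      = ∫ r, qf μ r ^ 2 ∂unitMeasure + ∫ r, qf ν r ^ 2 ∂unitMeasure
        - 2 * ∫ r, qf μ r * qf ν r ∂unitMeasure := by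
    rw [show (fun r => (qf μ r - qf ν r) ^ 2)
        = fun r => (qf μ r ^ 2 + qf ν r ^ 2) - 2 * (qf μ r * qf ν r) from
        funext fun r => by ring]
    have i12 : Integrable (fun r => qf μ r ^ 2 + qf ν r ^ 2) unitMeasure := hqμ2.add hqν2
    have e1 := integral_sub i12 (hq.const_mul 2)
    have e2 := integral_add hqμ2 hqν2
    rw [e1, e2, integral_const_mul]
  have hkey := integral_mul_le hμ2 hν2 hc
  rw [epi, elam]
  linarith [m1, m2, mq1, mq2]

end coupling2

/-! ### W2 facts -/

def W2sq' (μ ν : Measure ℝ) : ℝ :=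
  sInf {r : ℝ | ∃ π : Measure (ℝ × ℝ), IsCoupling π μ ν ∧ r = ∫ q, (q.1 - q.2) ^ 2 ∂π}

section W2facts

variable {μ ν : Measure ℝ} [IsProbabilityMeasure μ] [IsProbabilityMeasure ν]

lemma W2sq_set_nonneg :
    ∀ r ∈ {r : ℝ | ∃ π : Measure (ℝ × ℝ), IsCoupling π μ ν ∧ r = ∫ q, (q.1 - q.2) ^ 2 ∂π},
      0 ≤ r := by
  rintro r ⟨π, -, rfl⟩
  exact integral_nonneg (fun q => sq_nonneg _)

lemma W2sq_set_nonempty :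
    {r : ℝ | ∃ π : Measure (ℝ × ℝ), IsCoupling π μ ν ∧ r = ∫ q, (q.1 - q.2) ^ 2 ∂π}.Nonempty :=
  ⟨_, μ.prod ν, ⟨Measure.fst_prod, Measure.snd_prod⟩, rfl⟩

lemma W2sq_nonneg' : 0 ≤ W2sq' μ ν := Real.sInf_nonneg W2sq_set_nonneg

lemma qf_dist_le_W2sq (hμ2 : Integrable (fun x : ℝ => x ^ 2) μ)
    (hν2 : Integrable (fun x : ℝ => x ^ 2) ν) :
    ∫ r, (qf μ r - qf ν r) ^ 2 ∂unitMeasure ≤ W2sq' μ ν := by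
  refine le_of_forall_pos_le_add (fun ε hε => ?_)
  obtain ⟨r, hr, hlt⟩ := Real.lt_sInf_add_pos (W2sq_set_nonempty (μ := μ) (ν := ν)) hε
  obtain ⟨π, hc, rfl⟩ := hr
  exact le_trans (cost_comparison hμ2 hν2 hc) hlt.le

lemma W2sq_le_cost {π : Measure (ℝ × ℝ)} (hc : IsCoupling π μ ν) :
    W2sq' μ ν ≤ ∫ q, (q.1 - q.2) ^ 2 ∂π :=
  csInf_le ⟨0, fun r hr => W2sq_set_nonneg r hr⟩ ⟨π, hc, rfl⟩

end W2facts

/-! ### norm and laws on L2 -/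

lemma norm_sq_eq_integral (Z : L2) : ‖Z‖ ^ 2 = ∫ t, (Z t) ^ 2 ∂unitMeasure := by
  rw [← real_inner_self_eq_norm_sq, MeasureTheory.L2.inner_def]
  apply integral_congr_ae
  refine Filter.Eventually.of_forall (fun t => ?_)
  simp [RCLike.inner_apply, conj_trivial, sq]

lemma dist_qLp_sq {μ ν : Measure ℝ} (hμ : MemP2 μ) (hν : MemP2 ν) :
    ‖qLp μ hμ - qLp ν hν‖ ^ 2 = ∫ r, (qf μ r - qf ν r) ^ 2 ∂unitMeasure := by
  rw [norm_sq_eq_integral]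
  apply integral_congr_ae
  filter_upwards [Lp.coeFn_sub (qLp μ hμ) (qLp ν hν), coe_qLp hμ, coe_qLp hν] with t h1 h2 h3
  rw [h1]
  simp only [Pi.sub_apply, h2, h3]

lemma integral_sq_sub_lawOf2 (X Y : L2) :
    ∫ q, (q.1 - q.2) ^ 2 ∂(lawOf2 X Y) = ∫ t, (X t - Y t) ^ 2 ∂unitMeasure := by
  rw [lawOf2, integral_map ((aemeas_coe X).prodMk (aemeas_coe Y)) (by fun_prop)]

lemma W2sq_lawOf_le (X Y : L2) : W2sq' (lawOf X) (lawOf Y) ≤ ‖X - Y‖ ^ 2 := by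
  have h := W2sq_le_cost (μ := lawOf X) (ν := lawOf Y) (isCoupling_lawOf2 X Y)
  rw [integral_sq_sub_lawOf2] at h
  refine h.trans (le_of_eq ?_)
  rw [norm_sq_eq_integral]
  apply integral_congr_ae
  filter_upwards [Lp.coeFn_sub X Y] with t h1
  rw [h1]; rfl

/-- main convergence lemma: W2 convergence implies L2 convergence of quantile representatives -/
lemma qLp_tendsto {μ : Measure ℝ} {μs : ℕ → Measure ℝ} (hμ : MemP2 μ) (hμs : ∀ n, MemP2 (μs n))
    (hW : Tendsto (fun n => Real.sqrt (W2sq' (μs n) μ)) atTop (nhds 0)) :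
    Tendsto (fun n => qLp (μs n) (hμs n)) atTop (nhds (qLp μ hμ)) := by
  haveI := hμ.1
  haveI := fun n => (hμs n).1
  have hW2sq : Tendsto (fun n => W2sq' (μs n) μ) atTop (nhds 0) := by
    have : (fun n => W2sq' (μs n) μ)
        = fun n => Real.sqrt (W2sq' (μs n) μ) * Real.sqrt (W2sq' (μs n) μ) := by
      funext n
      rw [Real.mul_self_sqrt W2sq_nonneg']
    rw [this]
    have := hW.mul hW
    simpa using this
  have hnormsq : Tendsto (fun n => ‖qLp (μs n) (hμs n) - qLp μ hμ‖ ^ 2) atTop (nhds 0) := by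
    apply squeeze_zero (fun n => by positivity) (fun n => ?_) hW2sq
    rw [dist_qLp_sq (hμs n) hμ]
    exact qf_dist_le_W2sq (hμs n).2 hμ.2
  have hnorm : Tendsto (fun n => ‖qLp (μs n) (hμs n) - qLp μ hμ‖) atTop (nhds 0) := by
    have hcont := (Real.continuous_sqrt.tendsto 0).comp hnormsq
    rw [Real.sqrt_zero] at hcont
    refine hcont.congr (fun n => ?_)
    show Real.sqrt (‖qLp (μs n) (hμs n) - qLp μ hμ‖ ^ 2) = _
    exact Real.sqrt_sq (norm_nonneg _)
  exact tendsto_iff_norm_sub_tendsto_zero.mpr hnorm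

/-! ### lower semicontinuity helpers -/

lemma lsc_seq {f : L2 → EReal} (hf : LowerSemicontinuous f) {X : L2} {Xn : ℕ → L2}
    (h : Tendsto Xn atTop (nhds X)) : f X ≤ liminf (fun n => f (Xn n)) atTop := by
  by_contra hcon
  push_neg at hcon
  obtain ⟨y, hy1, hy2⟩ := exists_between hcon
  have hev : ∀ᶠ n in atTop, y < f (Xn n) := h.eventually (hf X y hy2)
  exact absurd (le_liminf_of_le (by isBoundedDefault) (hev.mono fun n hn => hn.le))
    (not_le.mpr hy1)


/-- Proposition: symmetric functions on `L2(0,1)` correspond to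
functions on Wasserstein space, and properness/lsc/convexity transfer. -/
theorem symmetric_function_correspondence (f : L2 → EReal)
    (hbot : ∀ X, f X ≠ ⊥) (hsymm : SymmL2 f) :
    ∃ F : Measure ℝ → EReal,
      -- F represents f
      (∀ X : L2, f X = F (lawOf X)) ∧
      -- F is unique (as a function on P₂(ℝ))
      (∀ F' : Measure ℝ → EReal, (∀ X : L2, f X = F' (lawOf X)) →
        ∀ μ : Measure ℝ, MemP2 μ → F' μ = F μ) ∧
      -- (a) properness transfers
      ((∃ X : L2, f X ≠ ⊤) ↔ ∃ μ : Measure ℝ, MemP2 μ ∧ F μ ≠ ⊤) ∧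
      -- (b) lower semicontinuity transfers
      (LowerSemicontinuous f ↔
        ∀ (μ : Measure ℝ) (μs : ℕ → Measure ℝ), MemP2 μ → (∀ n, MemP2 (μs n)) →
          Tendsto (fun n => W2 (μs n) μ) atTop (nhds 0) →
          F μ ≤ liminf (fun n => F (μs n)) atTop) ∧
      -- (c) convexity transfers
      (ConvexE f ↔
        ∀ μ μ' : Measure ℝ, MemP2 μ → MemP2 μ' →
          ∀ π : Measure (ℝ × ℝ), IsCoupling π μ μ' →
          ∀ α : ℝ, 0 ≤ α → α ≤ 1 →
          ∀ X X' : L2, lawOf2 X X' = π →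
            F (lawOf (α • X + (1 - α) • X'))
              ≤ (α : EReal) * F μ + ((1 - α : ℝ) : EReal) * F μ') := by
  classical
  set F : Measure ℝ → EReal := fun m => sInf {e : EReal | ∃ X : L2, lawOf X = m ∧ e = f X}
    with hFdef
  have rep : ∀ X : L2, f X = F (lawOf X) := by
    intro X
    apply le_antisymm
    · apply le_sInf
      rintro e ⟨X', hlaw, rfl⟩
      exact le_of_eq (hsymm X X' hlaw.symm)
    · exact sInf_le ⟨X, rfl, rfl⟩
  refine ⟨F, rep, ?_, ?_, ?_, ?_⟩
  · -- uniqueness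
    intro F' hF' μ hμ
    rw [← lawOf_qLp hμ, ← hF' (qLp μ hμ), rep (qLp μ hμ)]
  · -- (a) properness
    constructor
    · rintro ⟨X, hX⟩
      exact ⟨lawOf X, memP2_lawOf X, by rw [← rep X]; exact hX⟩
    · rintro ⟨μ, hμ, hμtop⟩
      refine ⟨qLp μ hμ, ?_⟩
      rw [rep (qLp μ hμ), lawOf_qLp hμ]
      exact hμtop
  · -- (b) lower semicontinuity
    constructor
    · intro hlsc μ μs hμ hμs hW
      have hXn : Tendsto (fun n => qLp (μs n) (hμs n)) atTop (nhds (qLp μ hμ)) :=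
        qLp_tendsto hμ hμs hW
      have h1 : F μ = f (qLp μ hμ) := by rw [rep, lawOf_qLp]
      have h2 : (fun n => F (μs n)) = fun n => f (qLp (μs n) (hμs n)) := by
        funext n; rw [rep, lawOf_qLp]
      rw [h1, h2]
      exact lsc_seq hlsc hXn
    · intro h X y hy
      by_contra hcon
      rw [Filter.not_eventually] at hcon
      have hfreq := (Metric.nhds_basis_ball.frequently_iff).mp hcon
      have hchoice : ∀ n : ℕ, ∃ z : L2, dist z X < 1 / (n + 1 : ℝ) ∧ f z ≤ y := by
        intro n
        obtain ⟨z, hz1, hz2⟩ := hfreq (1 / (n + 1 : ℝ)) (by positivity)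
        exact ⟨z, Metric.mem_ball.mp hz1, not_lt.mp hz2⟩
      choose Z hZdist hZle using hchoice
      have hdistlim : Tendsto (fun n => dist (Z n) X) atTop (nhds 0) := by
        apply squeeze_zero (fun n => dist_nonneg) (fun n => (hZdist n).le)
        exact tendsto_one_div_add_atTop_nhds_zero_nat
      have hWlim : Tendsto (fun n => W2 (lawOf (Z n)) (lawOf X)) atTop (nhds 0) := by
        apply squeeze_zero (fun n => Real.sqrt_nonneg _) (fun n => ?_) hdistlim
        calc W2 (lawOf (Z n)) (lawOf X) = Real.sqrt (W2sq' (lawOf (Z n)) (lawOf X)) := rfl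
        _ ≤ Real.sqrt (‖Z n - X‖ ^ 2) := Real.sqrt_le_sqrt (W2sq_lawOf_le _ _)
        _ = ‖Z n - X‖ := Real.sqrt_sq (norm_nonneg _)
        _ = dist (Z n) X := (dist_eq_norm _ _).symm
      have hineq := h (lawOf X) (fun n => lawOf (Z n)) (memP2_lawOf X)
        (fun n => memP2_lawOf (Z n)) hWlim
      have hlim : liminf (fun n => F (lawOf (Z n))) atTop ≤ y := by
        refine liminf_le_of_frequently_le' (Filter.Frequently.of_forall (fun n => ?_))
        rw [← rep]
        exact hZle n
      have hfinal : F (lawOf X) ≤ y := le_trans hineq hlim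
      rw [← rep X] at hfinal
      exact absurd (lt_of_lt_of_le hy hfinal) (lt_irrefl y)
  · -- (c) convexity
    constructor
    · intro hconv μ μ' hμ hμ' π hcpl α hα0 hα1 X X' hlaw
      have h1 : lawOf X = μ := by rw [← hcpl.1, ← hlaw, lawOf2_fst]
      have h2 : lawOf X' = μ' := by rw [← hcpl.2, ← hlaw, lawOf2_snd]
      have hkey := hconv X X' α (1 - α) hα0 (by linarith) (by ring)
      rw [← rep, ← h1, ← h2, ← rep X, ← rep X']
      exact hkey
    · intro h X Y a b ha hb hab
      have hb' : b = 1 - a := by linarith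
      subst hb'
      have hcpl := isCoupling_lawOf2 X Y
      have hkey := h (lawOf X) (lawOf Y) (memP2_lawOf X) (memP2_lawOf Y) (lawOf2 X Y) hcpl
        a ha (by linarith) X Y rfl
      rw [← rep, ← rep, ← rep] at hkey
      exact hkey


end
end

section
/- Let f: L2(0,1) → ℝ∪{+∞} be symmetric, lower semicontinuous, proper, and convex. Then there exists a map 𝔄: P₂(ℝ) → PR₁ such that prox[f](Y) = 𝔄(law of Y)∘Y for every Y ∈ L2(0,1). In particular, for every Y ∈ L2(0,1), prox[f](Y) is measurable with respect to the σ-algebra generated by Y, and whenever Y and Y′ have the same law, the joint law of (Y, prox[f](Y)) equals the joint law of (Y′, prox[f](Y′)). -/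
open MeasureTheory ProbabilityTheory Filter
open scoped ENNReal NNReal

noncomputable section

section Basics

open Set

instance inst_s10 : IsProbabilityMeasure unitMeasure := by
  constructor
  rw [unitMeasure, Measure.restrict_apply_univ, Real.volume_Ioo]
  norm_num

lemma mul_integrable (X Z : L2) :
    Integrable (fun t => X t * Z t) unitMeasure := by
  have h := MeasureTheory.L2.integrable_inner (𝕜 := ℝ) Z X
  simpa [RCLike.inner_apply, starRingEnd_apply, star_trivial] using h

/-- representative truncated to `(0,1)`. -/
def trunc (X : L2) : ℝ → ℝ := Set.indicator (Set.Ioo 0 1) (fun t => X t)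

lemma trunc_ae (X : L2) : (fun t => X t) =ᵐ[unitMeasure] trunc X := by
  have : ∀ᵐ t ∂unitMeasure, t ∈ Set.Ioo (0:ℝ) 1 := ae_restrict_mem measurableSet_Ioo
  filter_upwards [this] with t ht
  simp [trunc, Set.indicator_of_mem ht]

lemma trunc_sm (X : L2) : StronglyMeasurable (trunc X) :=
  (Lp.stronglyMeasurable X).indicator measurableSet_Ioo

lemma trunc_memL2 (X : L2) : MemLp (trunc X) 2 (volume : Measure ℝ) := by
  rw [trunc, memLp_indicator_iff_restrict measurableSet_Ioo]
  exact Lp.memLp X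

end Basics

section Subgrad

lemma sub_mul_integrable (Y P Z Q : L2) :
    Integrable (fun t => (Y t - P t) * (Z t - Q t)) unitMeasure := by
  have h := mul_integrable (Y - P) (Z - Q)
  refine h.congr ?_
  filter_upwards [Lp.coeFn_sub Y P, Lp.coeFn_sub Z Q] with t h1 h2
  rw [h1, h2]; rfl

lemma prox_f_ne_top {f : L2 → EReal} (hproper : ∃ X, f X ≠ ⊤) {Y P : L2}
    (hP : IsProxL2 f Y P) : f P ≠ ⊤ := by
  obtain ⟨X₀, hX₀⟩ := hproper
  intro htop
  have h := hP.1 X₀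
  rw [objL2, objL2, htop, EReal.coe_add_top] at h
  have h2 : (((1:ℝ)/2 * ∫ t, (Y t - X₀ t) ^ 2 ∂unitMeasure : ℝ) : EReal) + f X₀ = ⊤ :=
    top_le_iff.mp h
  rcases eq_or_ne (f X₀) ⊥ with hb | hb
  · rw [hb] at h2
    simp at h2
  · lift f X₀ to ℝ using ⟨hX₀, hb⟩ with r hr
    rw [← EReal.coe_add] at h2
    exact EReal.coe_ne_top _ h2

/-- The subgradient inequality at a proximal point. -/
lemma prox_subgrad {f : L2 → EReal} (hbot : ∀ X, f X ≠ ⊥) (hproper : ∃ X, f X ≠ ⊤)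
    (hconv : ConvexE f) {Y P : L2} (hP : IsProxL2 f Y P) (Z : L2) :
    f P + ((∫ t, (Y t - P t) * (Z t - P t) ∂unitMeasure : ℝ) : EReal) ≤ f Z := by
  have hPtop : f P ≠ ⊤ := prox_f_ne_top hproper hP
  set rP : ℝ := (f P).toReal with hrPdef
  have hfP : f P = (rP : EReal) := (EReal.coe_toReal hPtop (hbot P)).symm
  rcases eq_or_ne (f Z) ⊤ with hZt | hZt
  · rw [hZt]; exact le_top
  set rZ : ℝ := (f Z).toReal with hrZdef
  have hfZ : f Z = (rZ : EReal) := (EReal.coe_toReal hZt (hbot Z)).symm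
  set I : ℝ := ∫ t, (Y t - P t) * (Z t - P t) ∂unitMeasure with hI
  set A : ℝ := ∫ t, (Y t - P t) ^ 2 ∂unitMeasure with hA
  set B : ℝ := ∫ t, (Z t - P t) * (Z t - P t) ∂unitMeasure with hB
  have hBnn : 0 ≤ B := by
    rw [hB]
    exact integral_nonneg fun t => mul_self_nonneg _
  have key : ∀ τ : ℝ, 0 < τ → τ ≤ 1 → I ≤ τ / 2 * B + (rZ - rP) := by
    intro τ hτ0 hτ1
    set X : L2 := P + τ • (Z - P) with hX
    have hXcoe : (fun t => X t) =ᵐ[unitMeasure] fun t => P t + τ * (Z t - P t) := by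
      filter_upwards [Lp.coeFn_add P (τ • (Z - P)), Lp.coeFn_smul τ (Z - P),
        Lp.coeFn_sub Z P] with t h1 h2 h3
      rw [hX]
      calc (P + τ • (Z - P)) t = P t + (τ • (Z - P) : L2) t := h1
        _ = P t + τ * (Z - P) t := by rw [h2]; simp
        _ = P t + τ * (Z t - P t) := by rw [h3]; simp
    have hXconv : X = (1 - τ) • P + τ • Z := by rw [hX]; module
    have hfX : f X ≤ (((1 - τ) * rP + τ * rZ : ℝ) : EReal) := by
      have h := hconv P Z (1 - τ) τ (by linarith) (le_of_lt hτ0) (by ring)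
      rw [← hXconv, hfP, hfZ] at h
      calc f X ≤ ((1 - τ : ℝ) : EReal) * (rP : EReal) + (τ : EReal) * (rZ : EReal) := h
        _ = (((1 - τ) * rP + τ * rZ : ℝ) : EReal) := by
            rw [← EReal.coe_mul, ← EReal.coe_mul, ← EReal.coe_add]
    have hmin := hP.1 X
    have hE1 : ∫ t, (Y t - X t) ^ 2 ∂unitMeasure = A - 2 * τ * I + τ ^ 2 * B := by
      have h1 : ∫ t, (Y t - X t) ^ 2 ∂unitMeasure
          = ∫ t, ((Y t - P t) - τ * (Z t - P t)) ^ 2 ∂unitMeasure := by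
        refine integral_congr_ae ?_
        filter_upwards [hXcoe] with t ht
        rw [ht]; ring
      have h2 : ∀ t : ℝ, ((Y t - P t) - τ * (Z t - P t)) ^ 2
          = (Y t - P t) * (Y t - P t) - (2 * τ) * ((Y t - P t) * (Z t - P t))
            + τ ^ 2 * ((Z t - P t) * (Z t - P t)) := fun t => by ring
      have i2 : Integrable (fun t => 2 * τ * ((Y t - P t) * (Z t - P t))) unitMeasure :=
        (sub_mul_integrable Y P Z P).const_mul _
      have i1 : Integrable
          (fun t => (Y t - P t) * (Y t - P t) - 2 * τ * ((Y t - P t) * (Z t - P t)))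
          unitMeasure := (sub_mul_integrable Y P Y P).sub i2
      have i3 : Integrable (fun t => τ ^ 2 * ((Z t - P t) * (Z t - P t))) unitMeasure :=
        (sub_mul_integrable Z P Z P).const_mul _
      rw [h1]
      simp_rw [h2]
      rw [integral_add i1 i3, integral_sub (sub_mul_integrable Y P Y P) i2,
        integral_const_mul, integral_const_mul]
      have hAeq : A = ∫ t, (Y t - P t) * (Y t - P t) ∂unitMeasure := by
        rw [hA]; congr 1; funext t; ring
      rw [hAeq]
    -- extract the real inequality from hmin
    rw [objL2, objL2, hfP, hE1] at hmin
    have hreal : (1:ℝ)/2 * A + rP ≤ 1/2 * (A - 2*τ*I + τ^2*B) + ((1-τ)*rP + τ*rZ) := by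
      have h3 : (((1:ℝ)/2 * A + rP : ℝ) : EReal)
          ≤ (((1:ℝ)/2 * (A - 2*τ*I + τ^2*B) + ((1-τ)*rP + τ*rZ) : ℝ) : EReal) := by
        rw [EReal.coe_add, EReal.coe_add]
        calc ((1/2 * A : ℝ) : EReal) + (rP : EReal) ≤ ((1/2 * (A - 2*τ*I + τ^2*B) : ℝ) : EReal) + f X :=
              hmin
          _ ≤ _ := by exact add_le_add le_rfl hfX
      exact_mod_cast h3
    have h4 : τ * I ≤ τ * (τ / 2 * B + (rZ - rP)) := by nlinarith
    exact le_of_mul_le_mul_left h4 hτ0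
  -- take τ → 0
  have hIle : I ≤ rZ - rP := by
    by_contra hc
    push_neg at hc
    set ε : ℝ := I - (rZ - rP) with hε
    have hε0 : 0 < ε := by linarith
    set τ : ℝ := min 1 (ε / (B + 1)) with hτ
    have hτ0 : 0 < τ := lt_min one_pos (div_pos hε0 (by linarith))
    have hτ1 : τ ≤ 1 := min_le_left _ _
    have h5 := key τ hτ0 hτ1
    have h6 : τ ≤ ε / (B + 1) := min_le_right _ _
    have h7 : τ / 2 * B < ε := by
      have h8 : τ * B ≤ ε / (B + 1) * B := mul_le_mul_of_nonneg_right h6 hBnn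
      have h9 : ε / (B + 1) * B ≤ ε := by
        rw [div_mul_eq_mul_div, div_le_iff₀ (by linarith : (0:ℝ) < B + 1)]
        nlinarith
      nlinarith
    linarith
  rw [hfP, hfZ, ← EReal.coe_add]
  exact_mod_cast (by linarith : rP + I ≤ rZ)

end Subgrad

section Swap

open Set

/-- Swap of the intervals `[a, a+h)` and `[a+d, a+d+h)`. -/
def swapFun (a d h : ℝ) : ℝ → ℝ := fun t =>
  if t ∈ Set.Ico a (a + h) then t + d
  else if t ∈ Set.Ico (a + d) (a + d + h) then t - d
  else t

variable {a d h : ℝ}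

lemma swapFun_measurable (a d h : ℝ) : Measurable (swapFun a d h) := by
  unfold swapFun
  refine Measurable.ite measurableSet_Ico (by measurability) ?_
  exact Measurable.ite measurableSet_Ico (by measurability) measurable_id

lemma swapFun_involutive (hh : 0 < h) (hhd : h ≤ d) :
    Function.Involutive (swapFun a d h) := by
  intro t
  unfold swapFun
  rcases em (t ∈ Set.Ico a (a + h)) with hA | hA
  · rw [if_pos hA]
    have h1 : t + d ∉ Set.Ico a (a + h) := by
      rw [Set.mem_Ico] at hA ⊢
      push_neg
      intro _
      linarith [hA.1]
    have h2 : t + d ∈ Set.Ico (a + d) (a + d + h) := by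
      rw [Set.mem_Ico] at hA ⊢
      constructor <;> linarith [hA.1, hA.2]
    rw [if_neg h1, if_pos h2]
    ring
  · rw [if_neg hA]
    rcases em (t ∈ Set.Ico (a + d) (a + d + h)) with hB | hB
    · rw [if_pos hB]
      have h1 : t - d ∈ Set.Ico a (a + h) := by
        rw [Set.mem_Ico] at hB ⊢
        constructor <;> linarith [hB.1, hB.2]
      rw [if_pos h1]
      ring
    · rw [if_neg hB, if_neg hA, if_neg hB]

lemma swapFun_measurePreserving (ha : 0 < a) (hh : 0 < h) (hhd : h ≤ d)
    (hend : a + d + h ≤ 1) :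
    MeasurePreserving (swapFun a d h) unitMeasure unitMeasure := by
  have hd : 0 < d := lt_of_lt_of_le hh hhd
  refine ⟨swapFun_measurable a d h, ?_⟩
  ext E hE
  rw [Measure.map_apply (swapFun_measurable a d h) hE]
  rw [unitMeasure, Measure.restrict_apply (((swapFun_measurable a d h) hE)),
    Measure.restrict_apply hE]
  set A : Set ℝ := Set.Ico a (a + h) with hAdef
  set B : Set ℝ := Set.Ico (a + d) (a + d + h) with hBdef
  set I : Set ℝ := Set.Ioo (0:ℝ) 1 with hIdef
  have hAI : A ⊆ I := fun t ht => by
    rw [hAdef, Set.mem_Ico] at ht; rw [hIdef, Set.mem_Ioo]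
    constructor <;> [linarith [ht.1]; linarith [ht.2]]
  have hBI : B ⊆ I := fun t ht => by
    rw [hBdef, Set.mem_Ico] at ht; rw [hIdef, Set.mem_Ioo]
    constructor <;> [linarith [ht.1]; linarith [ht.2]]
  have hAB : Disjoint A B := by
    refine Set.disjoint_left.mpr fun t ht ht' => ?_
    rw [hAdef, Set.mem_Ico] at ht
    rw [hBdef, Set.mem_Ico] at ht'
    linarith [ht.2, ht'.1]
  have hsplit : swapFun a d h ⁻¹' E ∩ I =
      ((fun t => t + d) ⁻¹' E ∩ A) ∪ (((fun t => t - d) ⁻¹' E ∩ B) ∪ (E ∩ (I \ (A ∪ B)))) := by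
    ext t
    simp only [Set.mem_inter_iff, Set.mem_union, Set.mem_preimage, Set.mem_diff, Set.mem_union]
    constructor
    · rintro ⟨htE, htI⟩
      unfold swapFun at htE
      rcases em (t ∈ A) with hA | hA
      · left; rw [hAdef] at hA; rw [if_pos hA] at htE; exact ⟨htE, hA⟩
      · right
        rcases em (t ∈ B) with hB | hB
        · left
          rw [hAdef] at hA; rw [hBdef] at hB
          rw [if_neg hA, if_pos hB] at htE
          exact ⟨htE, hB⟩
        · right
          rw [hAdef] at hA; rw [hBdef] at hB
          rw [if_neg hA, if_neg hB] at htE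
          exact ⟨htE, htI, fun hc => hc.elim hA hB⟩
    · rintro (⟨htE, htA⟩ | ⟨htE, htB⟩ | ⟨htE, htI, htAB⟩)
      · refine ⟨?_, hAI htA⟩
        unfold swapFun
        rw [hAdef] at htA
        rw [if_pos htA]; exact htE
      · refine ⟨?_, hBI htB⟩
        unfold swapFun
        have hA' : t ∉ Set.Ico a (a + h) := by
          intro hc
          exact (Set.disjoint_left.mp hAB) hc htB
        rw [hBdef] at htB
        rw [if_neg hA', if_pos htB]; exact htE
      · refine ⟨?_, htI⟩
        unfold swapFun
        have hA' : t ∉ Set.Ico a (a + h) := fun hc => htAB (Or.inl hc)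
        have hB' : t ∉ Set.Ico (a + d) (a + d + h) := fun hc => htAB (Or.inr hc)
        rw [if_neg hA', if_neg hB']; exact htE
  rw [hsplit]
  have hmA : MeasurableSet ((fun t => t + d) ⁻¹' E ∩ A) :=
    ((measurable_add_const d) hE).inter measurableSet_Ico
  have hmB : MeasurableSet ((fun t => t - d) ⁻¹' E ∩ B) :=
    ((measurable_sub_const d) hE).inter measurableSet_Ico
  have hmC : MeasurableSet (E ∩ (I \ (A ∪ B))) :=
    hE.inter (measurableSet_Ioo.diff (measurableSet_Ico.union measurableSet_Ico))
  have hd1 : Disjoint ((fun t => t + d) ⁻¹' E ∩ A)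
      (((fun t => t - d) ⁻¹' E ∩ B) ∪ (E ∩ (I \ (A ∪ B)))) := by
    refine Set.disjoint_left.mpr fun t ht hc => ?_
    rcases hc with hc | hc
    · exact (Set.disjoint_left.mp hAB) ht.2 hc.2
    · exact hc.2.2 (Or.inl ht.2)
  have hd2 : Disjoint ((fun t => t - d) ⁻¹' E ∩ B) (E ∩ (I \ (A ∪ B))) := by
    refine Set.disjoint_left.mpr fun t ht hc => ?_
    exact hc.2.2 (Or.inr ht.2)
  rw [measure_union hd1 (hmB.union hmC), measure_union hd2 hmC]
  -- translations
  have htA : (fun t => t + d) ⁻¹' E ∩ A = (fun t => t + d) ⁻¹' (E ∩ B) := by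
    rw [Set.preimage_inter]
    congr 1
    ext t
    rw [hAdef, hBdef]
    simp only [Set.mem_preimage, Set.mem_Ico]
    constructor <;> intro ht <;> constructor <;> linarith [ht.1, ht.2]
  have htB : (fun t => t - d) ⁻¹' E ∩ B = (fun t => t - d) ⁻¹' (E ∩ A) := by
    rw [Set.preimage_inter]
    congr 1
    ext t
    rw [hAdef, hBdef]
    simp only [Set.mem_preimage, Set.mem_Ico]
    constructor <;> intro ht <;> constructor <;> linarith [ht.1, ht.2]
  rw [htA, htB]
  have hvA : volume ((fun t => t + d) ⁻¹' (E ∩ B)) = volume (E ∩ B) := by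
    rw [show (fun t : ℝ => t + d) = fun t => t + d from rfl]
    exact measure_preimage_add_right volume d (E ∩ B)
  have hvB : volume ((fun t => t - d) ⁻¹' (E ∩ A)) = volume (E ∩ A) := by
    have : (fun t : ℝ => t - d) = fun t => t + (-d) := by funext t; ring
    rw [this]
    exact measure_preimage_add_right volume (-d) (E ∩ A)
  rw [hvA, hvB]
  -- now split E ∩ I the same way
  have hEI : E ∩ I = (E ∩ A) ∪ ((E ∩ B) ∪ (E ∩ (I \ (A ∪ B)))) := by
    ext t
    simp only [Set.mem_inter_iff, Set.mem_union, Set.mem_diff, Set.mem_union]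
    constructor
    · rintro ⟨htE, htI⟩
      rcases em (t ∈ A) with hA | hA
      · exact Or.inl ⟨htE, hA⟩
      · rcases em (t ∈ B) with hB | hB
        · exact Or.inr (Or.inl ⟨htE, hB⟩)
        · exact Or.inr (Or.inr ⟨htE, htI, fun hc => hc.elim hA hB⟩)
    · rintro (⟨htE, htA⟩ | ⟨htE, htB⟩ | ⟨htE, htI, _⟩)
      · exact ⟨htE, hAI htA⟩
      · exact ⟨htE, hBI htB⟩
      · exact ⟨htE, htI⟩
  rw [hEI]
  have hd1' : Disjoint (E ∩ A) ((E ∩ B) ∪ (E ∩ (I \ (A ∪ B)))) := by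
    refine Set.disjoint_left.mpr fun t ht hc => ?_
    rcases hc with hc | hc
    · exact (Set.disjoint_left.mp hAB) ht.2 hc.2
    · exact hc.2.2 (Or.inl ht.2)
  have hd2' : Disjoint (E ∩ B) (E ∩ (I \ (A ∪ B))) := by
    refine Set.disjoint_left.mpr fun t ht hc => ?_
    exact hc.2.2 (Or.inr ht.2)
  rw [measure_union hd1' ((hE.inter measurableSet_Ico).union hmC),
    measure_union hd2' hmC]
  ring

end Swap

section CompInfra

/-- Composition of an element of `L2` with a measure preserving map. -/
def cmpL2 (s : ℝ → ℝ) (hs : MeasurePreserving s unitMeasure unitMeasure) (X : L2) : L2 :=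
  Lp.compMeasurePreserving s hs X

lemma cmp_coe {s : ℝ → ℝ} (hs : MeasurePreserving s unitMeasure unitMeasure) (X : L2) :
    (fun t => (cmpL2 s hs X) t) =ᵐ[unitMeasure] fun t => X (s t) :=
  Lp.coeFn_compMeasurePreserving X hs

lemma lawOf_cmp {s : ℝ → ℝ} (hs : MeasurePreserving s unitMeasure unitMeasure) (X : L2) :
    lawOf (cmpL2 s hs X) = lawOf X := by
  rw [lawOf, lawOf, Measure.map_congr (cmp_coe hs X)]
  have : (fun t => X (s t)) = (fun t => X t) ∘ s := rfl
  rw [this, ← Measure.map_map (Lp.stronglyMeasurable X).measurable hs.measurable, hs.map_eq]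

lemma integral_comp_mp {s : ℝ → ℝ} (hs : MeasurePreserving s unitMeasure unitMeasure)
    {F : ℝ → ℝ} (hF : AEStronglyMeasurable F unitMeasure) :
    ∫ t, F (s t) ∂unitMeasure = ∫ t, F t ∂unitMeasure := by
  conv_rhs => rw [← hs.map_eq]
  rw [integral_map hs.aemeasurable (by rwa [hs.map_eq])]

/-- Subgradient inequality transported by a measure-preserving involution. -/
lemma prox_subgrad_swapped {f : L2 → EReal} (hsymm : SymmL2 f) (hbot : ∀ X, f X ≠ ⊥)
    (hproper : ∃ X, f X ≠ ⊤) (hconv : ConvexE f) {Y P : L2} (hP : IsProxL2 f Y P)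
    {s : ℝ → ℝ} (hs : MeasurePreserving s unitMeasure unitMeasure)
    (hinv : Function.Involutive s) (Z : L2) :
    f P + ((∫ t, (Y (s t) - P (s t)) * (Z t - P (s t)) ∂unitMeasure : ℝ) : EReal) ≤ f Z := by
  set Zs : L2 := cmpL2 s hs Z with hZs
  have h1 := prox_subgrad hbot hproper hconv hP Zs
  have h2 : f Zs = f Z := hsymm Zs Z (lawOf_cmp hs Z)
  have h3 : ∫ t, (Y t - P t) * (Zs t - P t) ∂unitMeasure
      = ∫ t, (Y (s t) - P (s t)) * (Z t - P (s t)) ∂unitMeasure := by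
    have e1 : ∫ t, (Y t - P t) * (Zs t - P t) ∂unitMeasure
        = ∫ t, (Y t - P t) * (Z (s t) - P t) ∂unitMeasure := by
      refine integral_congr_ae ?_
      filter_upwards [cmp_coe hs Z] with t ht
      rw [ht]
    set G : ℝ → ℝ := fun t => (Y t - P t) * (Z (s t) - P t) with hG
    have hGm : AEStronglyMeasurable G unitMeasure := by
      refine ((Lp.stronglyMeasurable Y).sub (Lp.stronglyMeasurable P)).aestronglyMeasurable.mul
        (((Lp.stronglyMeasurable Z).comp_measurable hs.measurable).sub
          (Lp.stronglyMeasurable P)).aestronglyMeasurable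
    have e2 : ∫ t, G (s t) ∂unitMeasure = ∫ t, G t ∂unitMeasure := integral_comp_mp hs hGm
    have e3 : ∀ t, G (s t) = (Y (s t) - P (s t)) * (Z t - P (s t)) := by
      intro t
      rw [hG]
      simp only
      rw [hinv t]
    rw [e1, ← e2]
    exact integral_congr_ae (Filter.Eventually.of_forall fun t => (e3 t))
  rw [← h2, ← h3]
  exact h1

/-- The firm-nonexpansiveness-type inequality for an involution. -/
lemma prox_firm_swap {f : L2 → EReal} (hsymm : SymmL2 f) (hbot : ∀ X, f X ≠ ⊥)
    (hproper : ∃ X, f X ≠ ⊤) (hconv : ConvexE f) {Y P : L2} (hP : IsProxL2 f Y P)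
    {s : ℝ → ℝ} (hs : MeasurePreserving s unitMeasure unitMeasure)
    (hinv : Function.Involutive s) :
    ∫ t, ((P t - P (s t)) ^ 2 - (Y t - Y (s t)) * (P t - P (s t))) ∂unitMeasure ≤ 0 := by
  have hPtop : f P ≠ ⊤ := prox_f_ne_top hproper hP
  set rP : ℝ := (f P).toReal with hrP
  have hfP : f P = (rP : EReal) := (EReal.coe_toReal hPtop (hbot P)).symm
  set Ps : L2 := cmpL2 s hs P with hPs
  -- first inequality: subgrad at Z = Ps
  have h1 := prox_subgrad hbot hproper hconv hP Ps
  have h1' : f Ps = f P := hsymm Ps P (lawOf_cmp hs P)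
  have i1 : ∫ t, (Y t - P t) * (Ps t - P t) ∂unitMeasure ≤ 0 := by
    rw [h1', hfP, ← EReal.coe_add] at h1
    have := EReal.coe_le_coe_iff.mp h1
    linarith
  -- second inequality: swapped subgrad at Z = P
  have h2 := prox_subgrad_swapped hsymm hbot hproper hconv hP hs hinv P
  have i2 : ∫ t, (Y (s t) - P (s t)) * (P t - P (s t)) ∂unitMeasure ≤ 0 := by
    rw [hfP, ← EReal.coe_add] at h2
    have := EReal.coe_le_coe_iff.mp h2
    linarith
  -- rewrite first integral with the composition
  have e1 : ∫ t, (Y t - P t) * (Ps t - P t) ∂unitMeasure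
      = ∫ t, (Y t - P t) * (P (s t) - P t) ∂unitMeasure := by
    refine integral_congr_ae ?_
    filter_upwards [cmp_coe hs P] with t ht
    rw [ht]
  rw [e1] at i1
  -- integrability of the two pieces
  have j1 : Integrable (fun t => (Y t - P t) * (P (s t) - P t)) unitMeasure := by
    have := sub_mul_integrable Y P Ps P
    refine this.congr ?_
    filter_upwards [cmp_coe hs P] with t ht
    rw [ht]
  have j2 : Integrable (fun t => (Y (s t) - P (s t)) * (P t - P (s t))) unitMeasure := by
    have hcomp : (fun t => (Y (s t) - P (s t)) * (P t - P (s t)))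
        = (fun t => (Y t - P t) * (P (s t) - P t)) ∘ s := by
      funext t
      simp only [Function.comp_apply]
      rw [hinv t]
    rw [hcomp]
    exact (MeasurePreserving.integrable_comp hs j1.aestronglyMeasurable).mpr j1
  have key : ∫ t, ((Y t - P t) * (P (s t) - P t) + (Y (s t) - P (s t)) * (P t - P (s t)))
      ∂unitMeasure ≤ 0 := by
    rw [integral_add j1 j2]
    linarith
  have : (fun t => (P t - P (s t)) ^ 2 - (Y t - Y (s t)) * (P t - P (s t)))
      = fun t => (Y t - P t) * (P (s t) - P t) + (Y (s t) - P (s t)) * (P t - P (s t)) := by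
    funext t; ring
  rw [this]
  exact key

end CompInfra

section Localize

open Set

/-- The key local quantity. -/
def qd (Y P : L2) (t u : ℝ) : ℝ :=
  (trunc P t - trunc P u) ^ 2 - (trunc Y t - trunc Y u) * (trunc P t - trunc P u)

lemma qd_symm (Y P : L2) (t u : ℝ) : qd Y P t u = qd Y P u t := by unfold qd; ring

lemma swap_localize {f : L2 → EReal} (hsymm : SymmL2 f) (hbot : ∀ X, f X ≠ ⊥)
    (hproper : ∃ X, f X ≠ ⊤) (hconv : ConvexE f) {Y P : L2} (hP : IsProxL2 f Y P)
    {a d h : ℝ} (ha : 0 < a) (hh : 0 < h) (hhd : h ≤ d) (hend : a + d + h ≤ 1) :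
    ∫ t in Set.Ico a (a + h), qd Y P t (t + d) ∂(volume : Measure ℝ) ≤ 0 := by
  have hd : 0 < d := lt_of_lt_of_le hh hhd
  set s : ℝ → ℝ := swapFun a d h with hsdef
  have hs : MeasurePreserving s unitMeasure unitMeasure :=
    swapFun_measurePreserving ha hh hhd hend
  have hinv : Function.Involutive s := swapFun_involutive hh hhd
  have key := prox_firm_swap hsymm hbot hproper hconv hP hs hinv
  set F : ℝ → ℝ := fun t => (P t - P (s t)) ^ 2 - (Y t - Y (s t)) * (P t - P (s t)) with hF
  -- integrability
  have j1 : Integrable (fun t => (Y t - P t) * (P (s t) - P t)) unitMeasure := by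
    have := sub_mul_integrable Y P (cmpL2 s hs P) P
    refine this.congr ?_
    filter_upwards [cmp_coe hs P] with t ht
    rw [ht]
  have j2 : Integrable (fun t => (Y (s t) - P (s t)) * (P t - P (s t))) unitMeasure := by
    have hcomp : (fun t => (Y (s t) - P (s t)) * (P t - P (s t)))
        = (fun t => (Y t - P t) * (P (s t) - P t)) ∘ s := by
      funext t
      simp only [Function.comp_apply]
      rw [hinv t]
    rw [hcomp]
    exact (MeasurePreserving.integrable_comp hs j1.aestronglyMeasurable).mpr j1
  have jF : Integrable F unitMeasure := by
    refine (j1.add j2).congr (Filter.Eventually.of_forall fun t => ?_)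
    simp only [Pi.add_apply]
    rw [hF]; ring
  set A : Set ℝ := Set.Ico a (a + h) with hAdef
  set B : Set ℝ := Set.Ico (a + d) (a + d + h) with hBdef
  set I : Set ℝ := Set.Ioo (0:ℝ) 1 with hIdef
  have hAI : A ⊆ I := fun t ht => by
    rw [hAdef, Set.mem_Ico] at ht; rw [hIdef, Set.mem_Ioo]
    constructor <;> [linarith [ht.1]; linarith [ht.2]]
  have hBI : B ⊆ I := fun t ht => by
    rw [hBdef, Set.mem_Ico] at ht; rw [hIdef, Set.mem_Ioo]
    constructor <;> [linarith [ht.1]; linarith [ht.2]]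
  have hABI : A ∪ B ⊆ I := Set.union_subset hAI hBI
  have hABdisj : Disjoint A B := by
    refine Set.disjoint_left.mpr fun t ht ht' => ?_
    rw [hAdef, Set.mem_Ico] at ht
    rw [hBdef, Set.mem_Ico] at ht'
    linarith [ht.2, ht'.1]
  have hFI : IntegrableOn F I volume := by
    rw [IntegrableOn, ← unitMeasure]
    exact jF
  have keyI : ∫ t in I, F t ∂volume ≤ 0 := by
    rw [hIdef, ← unitMeasure]
    exact key
  have hIsplit : (A ∪ B) ∪ (I \ (A ∪ B)) = I := Set.union_diff_cancel hABI
  have hsplit1 : ∫ t in I, F t ∂volume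
      = (∫ t in A ∪ B, F t ∂volume) + ∫ t in I \ (A ∪ B), F t ∂volume := by
    have hu := setIntegral_union (f := F) (μ := (volume : Measure ℝ))
      (Set.disjoint_sdiff_right (s := A ∪ B) (t := I))
      (measurableSet_Ioo.diff (measurableSet_Ico.union measurableSet_Ico))
      (hFI.mono_set hABI) (hFI.mono_set Set.diff_subset)
    rw [hIsplit] at hu
    exact hu
  have hzero : ∫ t in I \ (A ∪ B), F t ∂volume = 0 := by
    rw [setIntegral_congr_fun
        (measurableSet_Ioo.diff (measurableSet_Ico.union measurableSet_Ico))
        (g := fun _ => (0:ℝ)) ?_, integral_zero]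
    intro t ht
    have hA : t ∉ Set.Ico a (a + h) := fun hc => ht.2 (Or.inl hc)
    have hB : t ∉ Set.Ico (a + d) (a + d + h) := fun hc => ht.2 (Or.inr hc)
    have hst : s t = t := by rw [hsdef]; unfold swapFun; rw [if_neg hA, if_neg hB]
    rw [hF]
    simp only
    rw [hst]
    ring
  have hsplit2 : ∫ t in A ∪ B, F t ∂volume
      = (∫ t in A, F t ∂volume) + ∫ t in B, F t ∂volume :=
    setIntegral_union hABdisj measurableSet_Ico
      (hFI.mono_set hAI) (hFI.mono_set hBI)
  have hAeq : ∫ t in A, F t ∂volume = ∫ t in A, qd Y P t (t + d) ∂volume := by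
    refine setIntegral_congr_fun measurableSet_Ico fun t ht => ?_
    have hst : s t = t + d := by
      rw [hsdef]; unfold swapFun; rw [if_pos ht]
    have h1 : trunc Y t = Y t := Set.indicator_of_mem (hAI ht) _
    have h2 : trunc P t = P t := Set.indicator_of_mem (hAI ht) _
    have htd : t + d ∈ B := by
      rw [hAdef, Set.mem_Ico] at ht; rw [hBdef, Set.mem_Ico]
      constructor <;> linarith [ht.1, ht.2]
    have h3 : trunc Y (t + d) = Y (t + d) := Set.indicator_of_mem (hBI htd) _
    have h4 : trunc P (t + d) = P (t + d) := Set.indicator_of_mem (hBI htd) _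
    rw [hF]
    simp only
    rw [hst]
    unfold qd
    rw [h1, h2, h3, h4]
  have hBeq : ∫ t in B, F t ∂volume = ∫ t in B, qd Y P t (t - d) ∂volume := by
    refine setIntegral_congr_fun measurableSet_Ico fun t ht => ?_
    have hA : t ∉ Set.Ico a (a + h) := by
      rw [hBdef, Set.mem_Ico] at ht
      rw [Set.mem_Ico]
      push_neg
      intro _
      linarith [ht.1]
    have hst : s t = t - d := by
      rw [hsdef]; unfold swapFun; rw [if_neg hA, if_pos ht]
    have h1 : trunc Y t = Y t := Set.indicator_of_mem (hBI ht) _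
    have h2 : trunc P t = P t := Set.indicator_of_mem (hBI ht) _
    have htd : t - d ∈ A := by
      rw [hBdef, Set.mem_Ico] at ht; rw [hAdef, Set.mem_Ico]
      constructor <;> linarith [ht.1, ht.2]
    have h3 : trunc Y (t - d) = Y (t - d) := Set.indicator_of_mem (hAI htd) _
    have h4 : trunc P (t - d) = P (t - d) := Set.indicator_of_mem (hAI htd) _
    rw [hF]
    simp only
    rw [hst]
    unfold qd
    rw [h1, h2, h3, h4]
  have htrans : ∫ t in B, qd Y P t (t - d) ∂volume = ∫ t in A, qd Y P t (t + d) ∂volume := by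
    rw [hBdef, hAdef]
    rw [integral_Ico_eq_integral_Ioo, ← integral_Ioc_eq_integral_Ioo,
      ← intervalIntegral.integral_of_le (by linarith : a + d ≤ a + d + h)]
    have e1 : ∫ x in (a + d)..(a + d + h), qd Y P x (x - d)
        = ∫ x in a..(a + h), qd Y P (x + d) (x + d - d) := by
      rw [intervalIntegral.integral_comp_add_right (fun x => qd Y P x (x - d)) d]
      congr 1
      ring
    rw [e1]
    have e2 : ∀ x : ℝ, qd Y P (x + d) (x + d - d) = qd Y P x (x + d) := by
      intro x
      rw [add_sub_cancel_right, qd_symm]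
    simp_rw [e2]
    rw [intervalIntegral.integral_of_le (by linarith : a ≤ a + h),
      integral_Ioc_eq_integral_Ioo, ← integral_Ico_eq_integral_Ioo]
  have hfinal : 2 * ∫ t in A, qd Y P t (t + d) ∂volume ≤ 0 := by
    have := keyI
    rw [hsplit1, hzero, hsplit2, hAeq, hBeq, htrans] at this
    linarith
  linarith

end Localize

section AeNonpos

open Set Metric
open scoped Topology

lemma memL2_mul_integrable {g k : ℝ → ℝ} (hg : MemLp g 2 (volume : Measure ℝ))
    (hk : MemLp k 2 (volume : Measure ℝ)) :
    Integrable (fun t => g t * k t) (volume : Measure ℝ) := by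
  have h := MeasureTheory.L2.integrable_inner (𝕜 := ℝ) (hk.toLp k) (hg.toLp g)
  have h2 : Integrable (fun t => (hg.toLp g) t * (hk.toLp k) t) volume := by
    simpa [RCLike.inner_apply, starRingEnd_apply, star_trivial] using h
  refine h2.congr ?_
  filter_upwards [hg.coeFn_toLp, hk.coeFn_toLp] with t h1 h2
  rw [h1, h2]

lemma trunc_shift_memL2 (X : L2) (d : ℝ) :
    MemLp (fun t => trunc X (t + d)) 2 (volume : Measure ℝ) :=
  (trunc_memL2 X).comp_measurePreserving (measurePreserving_add_right volume d)

lemma Gd_integrable (Y P : L2) (d : ℝ) :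
    Integrable (fun t => qd Y P t (t + d)) (volume : Measure ℝ) := by
  have hDb : MemLp (fun t => trunc P t - trunc P (t + d)) 2 (volume : Measure ℝ) :=
    (trunc_memL2 P).sub (trunc_shift_memL2 P d)
  have hEb : MemLp (fun t => trunc Y t - trunc Y (t + d)) 2 (volume : Measure ℝ) :=
    (trunc_memL2 Y).sub (trunc_shift_memL2 Y d)
  refine ((memL2_mul_integrable hDb hDb).sub (memL2_mul_integrable hEb hDb)).congr
    (Filter.Eventually.of_forall fun t => ?_)
  simp only [Pi.sub_apply]
  unfold qd
  ring

lemma qd_ae_nonpos {f : L2 → EReal} (hsymm : SymmL2 f) (hbot : ∀ X, f X ≠ ⊥)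
    (hproper : ∃ X, f X ≠ ⊤) (hconv : ConvexE f) {Y P : L2} (hP : IsProxL2 f Y P)
    {d : ℝ} (hd0 : 0 < d) (hd1 : d < 1) :
    ∀ᵐ t ∂(volume : Measure ℝ), t ∈ Set.Ioo 0 (1 - d) → qd Y P t (t + d) ≤ 0 := by
  have hGint := Gd_integrable Y P d
  have hloc : LocallyIntegrable (fun t => qd Y P t (t + d)) volume :=
    hGint.locallyIntegrable
  have hae := IsUnifLocDoublingMeasure.ae_tendsto_average (μ := (volume : Measure ℝ)) hloc 1
  filter_upwards [hae] with x hx hxI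
  have htend : Filter.Tendsto (fun r => ⨍ y in closedBall x r, qd Y P y (y + d) ∂volume)
      (𝓝[>] (0:ℝ)) (𝓝 (qd Y P x (x + d))) := by
    refine hx (fun _ => x) (fun r => r) tendsto_id ?_
    refine Filter.eventually_of_mem self_mem_nhdsWithin fun r hr => ?_
    have : (0:ℝ) < r := hr
    exact mem_closedBall_self (by linarith)
  refine le_of_tendsto htend ?_
  have hx0 : 0 < x := hxI.1
  have hx1 : x < 1 - d := hxI.2
  set rmax : ℝ := min x (min (d / 2) (1 - d - x)) with hrmaxdef
  have hrmax : 0 < rmax := by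
    refine lt_min hx0 (lt_min (by linarith) (by linarith))
  refine Filter.eventually_of_mem (Ioo_mem_nhdsGT_of_mem ⟨le_refl 0, hrmax⟩) fun r hr => ?_
  have hr0 : 0 < r := hr.1
  have hrx : r < x := lt_of_lt_of_le hr.2 (min_le_left _ _)
  have hrd : r < d / 2 := lt_of_lt_of_le hr.2 ((min_le_right _ _).trans (min_le_left _ _))
  have hrs : r < 1 - d - x := lt_of_lt_of_le hr.2 ((min_le_right _ _).trans (min_le_right _ _))
  have hint : ∫ y in closedBall x r, qd Y P y (y + d) ∂volume ≤ 0 := by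
    rw [Real.closedBall_eq_Icc, integral_Icc_eq_integral_Ioo, ← integral_Ico_eq_integral_Ioo]
    have hsw := swap_localize hsymm hbot hproper hconv hP
      (a := x - r) (d := d) (h := 2 * r) (by linarith) (by linarith) (by linarith) (by linarith)
    have : x - r + 2 * r = x + r := by ring
    rw [this] at hsw
    exact hsw
  rw [setAverage_eq]
  simp only [smul_eq_mul]
  exact mul_nonpos_of_nonneg_of_nonpos (inv_nonneg.mpr ENNReal.toReal_nonneg) hint

lemma qd_prod_null {f : L2 → EReal} (hsymm : SymmL2 f) (hbot : ∀ X, f X ≠ ⊥)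
    (hproper : ∃ X, f X ≠ ⊤) (hconv : ConvexE f) {Y P : L2} (hP : IsProxL2 f Y P) :
    (volume.prod (volume : Measure ℝ))
      {p : ℝ × ℝ | (p.1 ∈ Set.Ioo (0:ℝ) 1 ∧ p.2 ∈ Set.Ioo (0:ℝ) 1) ∧ 0 < qd Y P p.1 p.2}
      = 0 := by
  set Bad : Set (ℝ × ℝ) :=
    {p : ℝ × ℝ | (p.1 ∈ Set.Ioo (0:ℝ) 1 ∧ p.2 ∈ Set.Ioo (0:ℝ) 1) ∧ 0 < qd Y P p.1 p.2}
    with hBaddef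
  have hqdm : Measurable (fun p : ℝ × ℝ => qd Y P p.1 p.2) := by
    have hYm := (trunc_sm Y).measurable
    have hPm := (trunc_sm P).measurable
    unfold qd
    exact (((hPm.comp measurable_fst).sub (hPm.comp measurable_snd)).pow_const 2).sub
      (((hYm.comp measurable_fst).sub (hYm.comp measurable_snd)).mul
        ((hPm.comp measurable_fst).sub (hPm.comp measurable_snd)))
  have hBadm : MeasurableSet Bad := by
    rw [hBaddef]
    have h1 : MeasurableSet {p : ℝ × ℝ | p.1 ∈ Set.Ioo (0:ℝ) 1 ∧ p.2 ∈ Set.Ioo (0:ℝ) 1} :=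
      (measurable_fst measurableSet_Ioo).inter (measurable_snd measurableSet_Ioo)
    exact h1.inter (measurableSet_lt measurable_const hqdm)
  -- positive-shift slices are null
  have hpos : ∀ e : ℝ, 0 < e → e < 1 →
      (volume : Measure ℝ) {t : ℝ | (t, t + e) ∈ Bad} = 0 := by
    intro e he0 he1
    have hae := qd_ae_nonpos hsymm hbot hproper hconv hP he0 he1
    have hsub : {t : ℝ | (t, t + e) ∈ Bad}
        ⊆ {t : ℝ | ¬ (t ∈ Set.Ioo 0 (1 - e) → qd Y P t (t + e) ≤ 0)} := by
      intro t ht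
      rw [hBaddef] at ht
      simp only [Set.mem_setOf_eq] at ht ⊢
      intro hc
      have htI : t ∈ Set.Ioo 0 (1 - e) := by
        constructor
        · exact ht.1.1.1
        · linarith [ht.1.2.2]
      linarith [hc htI, ht.2]
    exact measure_mono_null hsub hae
  have hall : ∀ e : ℝ, (volume : Measure ℝ) {t : ℝ | (t, t + e) ∈ Bad} = 0 := by
    intro e
    rcases lt_trichotomy e 0 with he | he | he
    · rcases le_or_gt e (-1) with he1 | he1
      · have : {t : ℝ | (t, t + e) ∈ Bad} = ∅ := by
          ext t
          simp only [Set.mem_setOf_eq, Set.mem_empty_iff_false, iff_false, hBaddef]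
          rintro ⟨⟨ht1, ht2⟩, -⟩
          have := ht1.2
          have := ht2.1
          linarith
        rw [this, measure_empty]
      · -- negative shift: translate to positive
        have hTset : {t : ℝ | (t, t + e) ∈ Bad}
            = (fun t => t + e) ⁻¹' {u : ℝ | (u, u + (-e)) ∈ Bad} := by
          ext t
          simp only [Set.mem_preimage, Set.mem_setOf_eq, hBaddef]
          constructor
          · rintro ⟨⟨ht1, ht2⟩, hq⟩
            refine ⟨⟨ht2, by rwa [show t + e + -e = t by ring]⟩, ?_⟩
            rw [show t + e + -e = t by ring, qd_symm]
            exact hq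
          · rintro ⟨⟨ht1, ht2⟩, hq⟩
            rw [show t + e + -e = t by ring] at ht2 hq
            refine ⟨⟨ht2, ht1⟩, ?_⟩
            rw [qd_symm]
            exact hq
        rw [hTset, measure_preimage_add_right]
        exact hpos (-e) (by linarith) (by linarith)
    · subst he
      have : {t : ℝ | (t, t + 0) ∈ Bad} = ∅ := by
        ext t
        simp only [Set.mem_setOf_eq, Set.mem_empty_iff_false, iff_false, hBaddef, add_zero]
        rintro ⟨-, hq⟩
        unfold qd at hq
        simp at hq
      rw [this, measure_empty]
    · rcases lt_or_ge e 1 with he1 | he1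
      · exact hpos e he he1
      · have : {t : ℝ | (t, t + e) ∈ Bad} = ∅ := by
          ext t
          simp only [Set.mem_setOf_eq, Set.mem_empty_iff_false, iff_false, hBaddef]
          rintro ⟨⟨ht1, ht2⟩, -⟩
          have := ht1.1
          have := ht2.2
          linarith
        rw [this, measure_empty]
  -- shear change of variable
  have hshear : MeasurePreserving (fun z : ℝ × ℝ => (z.1, z.1 + z.2))
      ((volume : Measure ℝ).prod volume) (volume.prod volume) :=
    measurePreserving_prod_add volume volume
  have h1 : (volume.prod (volume : Measure ℝ)) Bad
      = (volume.prod (volume : Measure ℝ)) ((fun z : ℝ × ℝ => (z.1, z.1 + z.2)) ⁻¹' Bad) :=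
    (hshear.measure_preimage hBadm.nullMeasurableSet).symm
  rw [h1, Measure.prod_apply_symm (hshear.measurable hBadm)]
  have h2 : ∀ y : ℝ, (volume : Measure ℝ)
      ((fun x => (x, y)) ⁻¹' ((fun z : ℝ × ℝ => (z.1, z.1 + z.2)) ⁻¹' Bad)) = 0 := by
    intro y
    have : ((fun x => (x, y)) ⁻¹' ((fun z : ℝ × ℝ => (z.1, z.1 + z.2)) ⁻¹' Bad))
        = {t : ℝ | (t, t + y) ∈ Bad} := rfl
    rw [this]
    exact hall y
  rw [lintegral_congr h2, lintegral_zero]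

end AeNonpos

section SupportEta

open Set Metric TopologicalSpace

/-- The support of a measure on `ℝ × ℝ`. -/
def suppSet (π : Measure (ℝ × ℝ)) : Set (ℝ × ℝ) :=
  {z | ∀ U : Set (ℝ × ℝ), IsOpen U → z ∈ U → π U ≠ 0}

lemma suppSet_compl_null (π : Measure (ℝ × ℝ)) : π (suppSet π)ᶜ = 0 := by
  obtain ⟨B, hBc, -, hBbasis⟩ := exists_countable_basis (ℝ × ℝ)
  set N : Set (Set (ℝ × ℝ)) := {U ∈ B | π U = 0} with hN
  have hsub : (suppSet π)ᶜ ⊆ ⋃₀ N := by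
    intro z hz
    simp only [Set.mem_compl_iff, suppSet, Set.mem_setOf_eq] at hz
    push_neg at hz
    obtain ⟨U, hUopen, hzU, hU0⟩ := hz
    obtain ⟨V, hVB, hzV, hVU⟩ := hBbasis.exists_subset_of_mem_open hzU hUopen
    exact ⟨V, ⟨hVB, measure_mono_null hVU hU0⟩, hzV⟩
  refine measure_mono_null hsub ?_
  have hNc : N.Countable := hBc.mono (Set.sep_subset _ _)
  rw [Set.sUnion_eq_biUnion]
  exact (measure_biUnion_null_iff hNc).mpr fun U hU => hU.2

lemma suppSet_compl_isOpen (π : Measure (ℝ × ℝ)) : IsOpen (suppSet π)ᶜ := by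
  rw [isOpen_iff_forall_mem_open]
  intro z hz
  simp only [Set.mem_compl_iff, suppSet, Set.mem_setOf_eq] at hz
  push_neg at hz
  obtain ⟨U, hUopen, hzU, hU0⟩ := hz
  refine ⟨U, fun w hw => ?_, hUopen, hzU⟩
  simp only [Set.mem_compl_iff, suppSet, Set.mem_setOf_eq]
  push_neg
  exact ⟨U, hUopen, hw, hU0⟩

lemma suppSet_nonempty (π : Measure (ℝ × ℝ)) [IsProbabilityMeasure π] :
    (suppSet π).Nonempty := by
  by_contra hc
  rw [Set.not_nonempty_iff_eq_empty] at hc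
  have h1 : (suppSet π)ᶜ = Set.univ := by rw [hc, Set.compl_empty]
  have h2 := suppSet_compl_null π
  rw [h1] at h2
  have := measure_univ (μ := π)
  rw [h2] at this
  exact one_ne_zero this.symm

/-- Monotone 1-Lipschitz extension of the graph carried by the support. -/
def etaOf (π : Measure (ℝ × ℝ)) : ℝ → ℝ :=
  fun y => sSup ((fun z : ℝ × ℝ => z.2 - max (z.1 - y) 0) '' suppSet π)

section EtaProps

variable {π : Measure (ℝ × ℝ)} (hne : (suppSet π).Nonempty)
  (hkey : ∀ z ∈ suppSet π, ∀ w ∈ suppSet π, z.2 - w.2 ≤ max (z.1 - w.1) 0)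

private lemma max_sub_subadd (a b c : ℝ) : max (a - c) 0 ≤ max (a - b) 0 + max (b - c) 0 := by
  refine max_le ?_ ?_
  · calc a - c = (a - b) + (b - c) := by ring
      _ ≤ max (a - b) 0 + max (b - c) 0 := add_le_add (le_max_left _ _) (le_max_left _ _)
  · exact add_nonneg (le_max_right _ _) (le_max_right _ _)

include hkey in
lemma etaOf_bddAbove (y : ℝ) {w : ℝ × ℝ} (hw : w ∈ suppSet π) :
    ∀ v ∈ (fun z : ℝ × ℝ => z.2 - max (z.1 - y) 0) '' suppSet π,
      v ≤ w.2 + max (y - w.1) 0 := by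
  rintro v ⟨z, hz, rfl⟩
  dsimp only
  have h1 : z.2 - w.2 ≤ max (z.1 - w.1) 0 := hkey z hz w hw
  have h2 : max (z.1 - w.1) 0 ≤ max (z.1 - y) 0 + max (y - w.1) 0 := max_sub_subadd _ _ _
  linarith

include hne hkey in
lemma etaOf_le (y : ℝ) {w : ℝ × ℝ} (hw : w ∈ suppSet π) :
    etaOf π y ≤ w.2 + max (y - w.1) 0 :=
  csSup_le (hne.image _) (etaOf_bddAbove hkey y hw)

include hne hkey in
lemma etaOf_ge (y : ℝ) {z : ℝ × ℝ} (hz : z ∈ suppSet π) :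
    z.2 - max (z.1 - y) 0 ≤ etaOf π y := by
  refine le_csSup ⟨hne.choose.2 + max (y - hne.choose.1) 0, ?_⟩ ⟨z, hz, rfl⟩
  intro v hv
  exact etaOf_bddAbove hkey y hne.choose_spec v hv

include hne hkey in
lemma etaOf_agrees {z : ℝ × ℝ} (hz : z ∈ suppSet π) : etaOf π z.1 = z.2 := by
  refine le_antisymm ?_ ?_
  · have := etaOf_le hne hkey z.1 hz
    simpa using this
  · have := etaOf_ge hne hkey z.1 hz
    simpa using this

include hne hkey in
lemma etaOf_lip_aux (y y' : ℝ) : etaOf π y ≤ etaOf π y' + |y - y'| := by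
  refine csSup_le (hne.image _) ?_
  rintro v ⟨z, hz, rfl⟩
  dsimp only
  have h1 : max (z.1 - y') 0 ≤ max (z.1 - y) 0 + max (y - y') 0 := max_sub_subadd _ _ _
  have h2 : max (y - y') 0 ≤ |y - y'| := max_le (le_abs_self _) (abs_nonneg _)
  have h3 : z.2 - max (z.1 - y') 0 ≤ etaOf π y' := etaOf_ge hne hkey y' hz
  linarith

include hne hkey in
lemma etaOf_isPR1 : IsPR1 (etaOf π) := by
  constructor
  · intro y y' hyy
    refine csSup_le (hne.image _) ?_
    rintro v ⟨z, hz, rfl⟩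
    dsimp only
    have h1 : max (z.1 - y') 0 ≤ max (z.1 - y) 0 := by
      refine max_le ?_ (le_max_right _ _)
      calc z.1 - y' ≤ z.1 - y := by linarith
        _ ≤ max (z.1 - y) 0 := le_max_left _ _
    have h2 : z.2 - max (z.1 - y') 0 ≤ etaOf π y' := etaOf_ge hne hkey y' hz
    linarith
  · intro y y'
    rw [abs_sub_le_iff]
    constructor
    · have := etaOf_lip_aux hne hkey y y'
      linarith [abs_sub_comm y y' ▸ this]
    · have := etaOf_lip_aux hne hkey y' y
      have h2 : |y' - y| = |y - y'| := abs_sub_comm y' y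
      linarith [h2 ▸ this]

end EtaProps

end SupportEta

section ProxRepr

open Set

lemma pairMap_measurable (Y P : L2) : Measurable (fun t => (Y t, P t)) :=
  (Lp.stronglyMeasurable Y).measurable.prodMk (Lp.stronglyMeasurable P).measurable

lemma lawOf2_isProb (Y P : L2) : IsProbabilityMeasure (lawOf2 Y P) := by
  rw [lawOf2]
  exact Measure.isProbabilityMeasure_map (pairMap_measurable Y P).aemeasurable

lemma lawOf_isProb (Y : L2) : IsProbabilityMeasure (lawOf Y) := by
  rw [lawOf]
  exact Measure.isProbabilityMeasure_map (Lp.stronglyMeasurable Y).measurable.aemeasurable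

lemma suppSet_graph {f : L2 → EReal} (hsymm : SymmL2 f) (hbot : ∀ X, f X ≠ ⊥)
    (hproper : ∃ X, f X ≠ ⊤) (hconv : ConvexE f) {Y P : L2} (hP : IsProxL2 f Y P) :
    ∀ z ∈ suppSet (lawOf2 Y P), ∀ w ∈ suppSet (lawOf2 Y P),
      (z.2 - w.2) ^ 2 ≤ (z.2 - w.2) * (z.1 - w.1) := by
  intro z hz w hw
  haveI := lawOf2_isProb Y P
  by_contra hcon
  push_neg at hcon
  set VBad : Set ((ℝ × ℝ) × (ℝ × ℝ)) :=
    {q | (q.1.2 - q.2.2) * (q.1.1 - q.2.1) < (q.1.2 - q.2.2) ^ 2} with hVdef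
  have hVopen : IsOpen VBad := by
    refine isOpen_lt ?_ ?_ <;> fun_prop
  have hzw : (z, w) ∈ VBad := by
    rw [hVdef]; exact hcon
  obtain ⟨U1, U2, hU1, hU2, hzU1, hwU2, hsub⟩ := isOpen_prod_iff.mp hVopen z w hzw
  have hφ := pairMap_measurable Y P
  have hprod : (lawOf2 Y P).prod (lawOf2 Y P)
      = Measure.map (Prod.map (fun t => (Y t, P t)) (fun t => (Y t, P t)))
        (unitMeasure.prod unitMeasure) := by
    rw [lawOf2, Measure.map_prod_map _ _ hφ hφ]
  have hnull : ((lawOf2 Y P).prod (lawOf2 Y P)) VBad = 0 := by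
    rw [hprod, Measure.map_apply (hφ.prodMap hφ) hVopen.measurableSet]
    have hrw : unitMeasure.prod unitMeasure
        = ((volume : Measure ℝ).prod volume).restrict
          (Set.Ioo (0:ℝ) 1 ×ˢ Set.Ioo (0:ℝ) 1) := by
      rw [unitMeasure, Measure.prod_restrict]
    rw [hrw, Measure.restrict_apply ((hφ.prodMap hφ) hVopen.measurableSet)]
    refine measure_mono_null ?_ (qd_prod_null hsymm hbot hproper hconv hP)
    rintro ⟨t, u⟩ ⟨hpre, hI⟩
    rw [Set.mem_prod] at hI
    obtain ⟨htI, huI⟩ := hI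
    simp only [Set.mem_preimage, Prod.map_apply, hVdef, Set.mem_setOf_eq] at hpre
    refine ⟨⟨htI, huI⟩, ?_⟩
    unfold qd trunc
    rw [Set.indicator_of_mem htI, Set.indicator_of_mem huI,
      Set.indicator_of_mem htI, Set.indicator_of_mem huI]
    nlinarith [hpre]
  have h1 : lawOf2 Y P U1 ≠ 0 := hz U1 hU1 hzU1
  have h2 : lawOf2 Y P U2 ≠ 0 := hw U2 hU2 hwU2
  have h3 : ((lawOf2 Y P).prod (lawOf2 Y P)) (U1 ×ˢ U2)
      = lawOf2 Y P U1 * lawOf2 Y P U2 := by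
    haveI := lawOf2_isProb Y P
    exact Measure.prod_prod U1 U2
  have h4 : ((lawOf2 Y P).prod (lawOf2 Y P)) (U1 ×ˢ U2) = 0 :=
    le_antisymm (hnull ▸ measure_mono hsub) zero_le
  rw [h3] at h4
  rcases mul_eq_zero.mp h4 with h5 | h5
  · exact h1 h5
  · exact h2 h5

lemma prox_hkey {f : L2 → EReal} (hsymm : SymmL2 f) (hbot : ∀ X, f X ≠ ⊥)
    (hproper : ∃ X, f X ≠ ⊤) (hconv : ConvexE f) {Y P : L2} (hP : IsProxL2 f Y P) :
    ∀ z ∈ suppSet (lawOf2 Y P), ∀ w ∈ suppSet (lawOf2 Y P),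
      z.2 - w.2 ≤ max (z.1 - w.1) 0 := by
  intro z hz w hw
  rcases le_or_gt (z.2 - w.2) 0 with hle | hlt
  · exact le_trans hle (le_max_right _ _)
  · have h := suppSet_graph hsymm hbot hproper hconv hP z hz w hw
    have h2 : z.2 - w.2 ≤ z.1 - w.1 := by
      have := (mul_le_mul_iff_left₀ hlt).mp (by rw [sq] at h; linarith [h] : (z.2 - w.2) * (z.2 - w.2) ≤ (z.1 - w.1) * (z.2 - w.2))
      exact this
    exact le_trans h2 (le_max_left _ _)

lemma prox_ae_mem_supp (Y P : L2) :
    ∀ᵐ t ∂unitMeasure, (Y t, P t) ∈ suppSet (lawOf2 Y P) := by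
  have h0 := suppSet_compl_null (lawOf2 Y P)
  rw [lawOf2, Measure.map_apply (pairMap_measurable Y P)
    (suppSet_compl_isOpen _).measurableSet] at h0
  rw [ae_iff]
  exact h0

/-- Lemma A: the proximal point is a PR₁ function of `Y`, given by `etaOf (lawOf2 Y P)`. -/
lemma prox_repr_ae {f : L2 → EReal} (hsymm : SymmL2 f) (hbot : ∀ X, f X ≠ ⊥)
    (hproper : ∃ X, f X ≠ ⊤) (hconv : ConvexE f) {Y P : L2} (hP : IsProxL2 f Y P) :
    (fun t => P t) =ᵐ[unitMeasure] fun t => etaOf (lawOf2 Y P) (Y t) := by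
  haveI := lawOf2_isProb Y P
  have hne := suppSet_nonempty (lawOf2 Y P)
  have hkey := prox_hkey hsymm hbot hproper hconv hP
  filter_upwards [prox_ae_mem_supp Y P] with t ht
  exact (etaOf_agrees hne hkey ht).symm

lemma prox_eta_isPR1 {f : L2 → EReal} (hsymm : SymmL2 f) (hbot : ∀ X, f X ≠ ⊥)
    (hproper : ∃ X, f X ≠ ⊤) (hconv : ConvexE f) {Y P : L2} (hP : IsProxL2 f Y P) :
    IsPR1 (etaOf (lawOf2 Y P)) := by
  haveI := lawOf2_isProb Y P
  exact etaOf_isPR1 (suppSet_nonempty (lawOf2 Y P)) (prox_hkey hsymm hbot hproper hconv hP)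

end ProxRepr

section EtaUnique

lemma IsPR1.lipschitz {η : ℝ → ℝ} (hη : IsPR1 η) : LipschitzWith 1 η := by
  refine LipschitzWith.of_dist_le_mul fun y y' => ?_
  rw [Real.dist_eq, Real.dist_eq, NNReal.coe_one, one_mul]
  exact hη.2 y y'

lemma IsPR1.continuous {η : ℝ → ℝ} (hη : IsPR1 η) : Continuous η :=
  hη.lipschitz.continuous

lemma pr1_comp_memL2 {η : ℝ → ℝ} (hη : IsPR1 η) (Y : L2) :
    MemLp (fun t => η (Y t)) 2 unitMeasure := by
  have hm : AEStronglyMeasurable (fun t => η (Y t)) unitMeasure :=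
    (hη.continuous.measurable.comp (Lp.stronglyMeasurable Y).measurable).aestronglyMeasurable
  have hbound : MemLp (fun t => |η 0| + |Y t|) 2 unitMeasure := by
    have := (memLp_const (|η 0|) (p := 2) (μ := unitMeasure)).add (Lp.memLp Y).norm
    exact this
  refine hbound.of_le hm ?_
  refine Filter.Eventually.of_forall fun t => ?_
  rw [Real.norm_eq_abs, Real.norm_eq_abs]
  have h1 : |η (Y t) - η 0| ≤ |Y t - 0| := hη.2 _ _
  rw [sub_zero] at h1
  have h2 : |η (Y t)| - |η 0| ≤ |η (Y t) - η 0| := abs_sub_abs_le_abs_sub _ _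
  have h3 : (0:ℝ) ≤ |η 0| + |Y t| := by positivity
  rw [abs_of_nonneg h3]
  linarith

/-- `η ∘ Y` as an element of `L2`. -/
def pr1CompL2 {η : ℝ → ℝ} (hη : IsPR1 η) (Y : L2) : L2 :=
  (pr1_comp_memL2 hη Y).toLp _

lemma pr1CompL2_coe {η : ℝ → ℝ} (hη : IsPR1 η) (Y : L2) :
    (fun t => (pr1CompL2 hη Y) t) =ᵐ[unitMeasure] fun t => η (Y t) :=
  (pr1_comp_memL2 hη Y).coeFn_toLp

lemma lawOf_pr1CompL2 {η : ℝ → ℝ} (hη : IsPR1 η) (Y : L2) :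
    lawOf (pr1CompL2 hη Y) = Measure.map η (lawOf Y) := by
  rw [lawOf, lawOf, Measure.map_congr (pr1CompL2_coe hη Y)]
  have : (fun t => η (Y t)) = η ∘ (fun t => Y t) := rfl
  rw [this, ← Measure.map_map hη.continuous.measurable (Lp.stronglyMeasurable Y).measurable]

/-- Lemma B: the scalar representation only depends on the law of the input. -/
lemma eta_unique {f : L2 → EReal} (hsymm : SymmL2 f) (hbot : ∀ X, f X ≠ ⊥)
    (hproper : ∃ X, f X ≠ ⊤) (hconv : ConvexE f) {Y P Y' P' : L2}
    (hP : IsProxL2 f Y P) (hP' : IsProxL2 f Y' P') (hlaw : lawOf Y = lawOf Y') :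
    ∀ᵐ y ∂(lawOf Y), etaOf (lawOf2 Y P) y = etaOf (lawOf2 Y' P') y := by
  set η : ℝ → ℝ := etaOf (lawOf2 Y P) with hηdef
  set η' : ℝ → ℝ := etaOf (lawOf2 Y' P') with hη'def
  have hη : IsPR1 η := prox_eta_isPR1 hsymm hbot hproper hconv hP
  have hη' : IsPR1 η' := prox_eta_isPR1 hsymm hbot hproper hconv hP'
  have hPae : (fun t => P t) =ᵐ[unitMeasure] fun t => η (Y t) :=
    prox_repr_ae hsymm hbot hproper hconv hP
  have hP'ae : (fun t => P' t) =ᵐ[unitMeasure] fun t => η' (Y' t) :=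
    prox_repr_ae hsymm hbot hproper hconv hP'
  set Z : L2 := pr1CompL2 hη' Y with hZdef
  set W : L2 := pr1CompL2 hη Y' with hWdef
  -- laws
  have hlawZ : lawOf Z = lawOf P' := by
    rw [hZdef, lawOf_pr1CompL2, hlaw, ← lawOf_pr1CompL2 hη' Y', lawOf, lawOf,
      Measure.map_congr (pr1CompL2_coe hη' Y'), ← Measure.map_congr hP'ae]
  have hlawW : lawOf W = lawOf P := by
    rw [hWdef, lawOf_pr1CompL2, ← hlaw, ← lawOf_pr1CompL2 hη Y, lawOf, lawOf,
      Measure.map_congr (pr1CompL2_coe hη Y), ← Measure.map_congr hPae]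
  have hfZ : f Z = f P' := hsymm Z P' hlawZ
  have hfW : f W = f P := hsymm W P hlawW
  -- real values of f at P, P'
  have hfPr : f P = ((f P).toReal : EReal) :=
    (EReal.coe_toReal (prox_f_ne_top hproper hP) (hbot P)).symm
  have hfP'r : f P' = ((f P').toReal : EReal) :=
    (EReal.coe_toReal (prox_f_ne_top hproper hP') (hbot P')).symm
  set rP : ℝ := (f P).toReal
  set rP' : ℝ := (f P').toReal
  -- subgradient inequalities
  have h1 := prox_subgrad hbot hproper hconv hP Z
  have h2 := prox_subgrad hbot hproper hconv hP' W
  rw [hfZ, hfPr, hfP'r, ← EReal.coe_add] at h1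
  rw [hfW, hfPr, hfP'r, ← EReal.coe_add] at h2
  have h1' : rP + ∫ t, (Y t - P t) * (Z t - P t) ∂unitMeasure ≤ rP' :=
    EReal.coe_le_coe_iff.mp h1
  have h2' : rP' + ∫ t, (Y' t - P' t) * (W t - P' t) ∂unitMeasure ≤ rP :=
    EReal.coe_le_coe_iff.mp h2
  -- rewrite the two integrals as integrals over the common law
  set ν : Measure ℝ := lawOf Y with hνdef
  set φ1 : ℝ → ℝ := fun y => (y - η y) * (η' y - η y) with hφ1def
  set φ2 : ℝ → ℝ := fun y => (y - η' y) * (η y - η' y) with hφ2def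
  have hφ1c : Continuous φ1 :=
    (continuous_id.sub hη.continuous).mul (hη'.continuous.sub hη.continuous)
  have hφ2c : Continuous φ2 :=
    (continuous_id.sub hη'.continuous).mul (hη.continuous.sub hη'.continuous)
  have hI1 : ∫ t, (Y t - P t) * (Z t - P t) ∂unitMeasure = ∫ y, φ1 y ∂ν := by
    have e1 : ∫ t, (Y t - P t) * (Z t - P t) ∂unitMeasure
        = ∫ t, φ1 (Y t) ∂unitMeasure := by
      refine integral_congr_ae ?_
      filter_upwards [hPae, pr1CompL2_coe hη' Y] with t h1 h2
      rw [hφ1def]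
      dsimp only
      rw [h1, h2]
    rw [e1, hνdef, lawOf,
      integral_map (Lp.stronglyMeasurable Y).measurable.aemeasurable
        hφ1c.aestronglyMeasurable]
  have hI2 : ∫ t, (Y' t - P' t) * (W t - P' t) ∂unitMeasure = ∫ y, φ2 y ∂ν := by
    have e1 : ∫ t, (Y' t - P' t) * (W t - P' t) ∂unitMeasure
        = ∫ t, φ2 (Y' t) ∂unitMeasure := by
      refine integral_congr_ae ?_
      filter_upwards [hP'ae, pr1CompL2_coe hη Y'] with t h1 h2
      rw [hφ2def]
      dsimp only
      rw [h1, h2]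
    rw [e1, hlaw, lawOf,
      integral_map (Lp.stronglyMeasurable Y').measurable.aemeasurable
        hφ2c.aestronglyMeasurable]
  -- integrability
  have hint1 : Integrable φ1 ν := by
    rw [hνdef, lawOf, integrable_map_measure hφ1c.aestronglyMeasurable
      (Lp.stronglyMeasurable Y).measurable.aemeasurable]
    have h := sub_mul_integrable Y (pr1CompL2 hη Y) Z (pr1CompL2 hη Y)
    refine h.congr ?_
    filter_upwards [pr1CompL2_coe hη Y, pr1CompL2_coe hη' Y] with t h1 h2
    show _ = φ1 (Y t)
    rw [hφ1def]
    dsimp only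
    rw [h1, h2]
  have hint2 : Integrable φ2 ν := by
    rw [hlaw, lawOf, integrable_map_measure hφ2c.aestronglyMeasurable
      (Lp.stronglyMeasurable Y').measurable.aemeasurable]
    have h := sub_mul_integrable Y' (pr1CompL2 hη' Y') W (pr1CompL2 hη' Y')
    refine h.congr ?_
    filter_upwards [pr1CompL2_coe hη' Y', pr1CompL2_coe hη Y'] with t h1 h2
    show _ = φ2 (Y' t)
    rw [hφ2def]
    dsimp only
    rw [h1, h2]
  -- combine
  set ψ : ℝ → ℝ := fun y => (η y - η' y) ^ 2 with hψdef
  have hψeq : ∀ y, ψ y = φ1 y + φ2 y := by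
    intro y
    rw [hψdef, hφ1def, hφ2def]
    dsimp only
    ring
  have hintψ : Integrable ψ ν :=
    (hint1.add hint2).congr (Filter.Eventually.of_forall fun y => by
      simp only [Pi.add_apply]
      exact (hψeq y).symm)
  have hψint : ∫ y, ψ y ∂ν = (∫ y, φ1 y ∂ν) + ∫ y, φ2 y ∂ν := by
    rw [show ψ = fun y => φ1 y + φ2 y from funext hψeq, integral_add hint1 hint2]
  have h0 : ∫ y, ψ y ∂ν = 0 := by
    refine le_antisymm ?_ (integral_nonneg fun y => sq_nonneg _)
    rw [hψint]
    rw [hI1] at h1'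
    rw [hI2] at h2'
    linarith
  have hae0 : ψ =ᵐ[ν] 0 :=
    (integral_eq_zero_iff_of_nonneg (fun y => sq_nonneg _) hintψ).mp h0
  filter_upwards [hae0] with y hy
  have h3 : (η y - η' y) ^ 2 = 0 := hy
  have h4 : η y - η' y = 0 := by
    nlinarith [sq_nonneg (η y - η' y)]
  rw [hηdef, hη'def] at h4 ⊢
  linarith

end EtaUnique

section Assembly

lemma ae_comp_of_ae_law {g g' : ℝ → ℝ} (hg : Measurable g) (hg' : Measurable g') (Y : L2)
    (h : ∀ᵐ y ∂(lawOf Y), g y = g' y) :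
    (fun t => g (Y t)) =ᵐ[unitMeasure] fun t => g' (Y t) := by
  rw [lawOf] at h
  have hmeas : MeasurableSet {y : ℝ | g y = g' y} := measurableSet_eq_fun hg hg'
  exact (ae_map_iff (Lp.stronglyMeasurable Y).measurable.aemeasurable hmeas).mp h

open Classical in
/-- The effective scalar representation. -/
def AOf (f : L2 → EReal) : Measure ℝ → ℝ → ℝ := fun νm =>
  if hν : ∃ q : L2 × L2, IsProxL2 f q.1 q.2 ∧ lawOf q.1 = νm then
    etaOf (lawOf2 hν.choose.1 hν.choose.2)
  else id

lemma AOf_pr1 {f : L2 → EReal} (hsymm : SymmL2 f) (hbot : ∀ X, f X ≠ ⊥)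
    (hproper : ∃ X, f X ≠ ⊤) (hconv : ConvexE f) (ν : Measure ℝ) : IsPR1 (AOf f ν) := by
  unfold AOf
  split_ifs with hν
  · exact prox_eta_isPR1 hsymm hbot hproper hconv hν.choose_spec.1
  · exact ⟨monotone_id, fun y y' => le_refl _⟩

lemma AOf_spec {f : L2 → EReal} (hsymm : SymmL2 f) (hbot : ∀ X, f X ≠ ⊥)
    (hproper : ∃ X, f X ≠ ⊤) (hconv : ConvexE f) {Y P : L2} (hYP : IsProxL2 f Y P) :
    (fun t => P t) =ᵐ[unitMeasure] fun t => AOf f (lawOf Y) (Y t) := by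
  have hex : ∃ q : L2 × L2, IsProxL2 f q.1 q.2 ∧ lawOf q.1 = lawOf Y := ⟨(Y, P), hYP, rfl⟩
  have hA : AOf f (lawOf Y) = etaOf (lawOf2 hex.choose.1 hex.choose.2) := by
    unfold AOf
    rw [dif_pos hex]
  obtain ⟨hQ, hQlaw⟩ := hex.choose_spec
  have hrep : (fun t => P t) =ᵐ[unitMeasure] fun t => etaOf (lawOf2 Y P) (Y t) :=
    prox_repr_ae hsymm hbot hproper hconv hYP
  have huniq := eta_unique hsymm hbot hproper hconv hQ hYP hQlaw
  rw [hQlaw] at huniq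
  have hg : Measurable (etaOf (lawOf2 hex.choose.1 hex.choose.2)) :=
    (prox_eta_isPR1 hsymm hbot hproper hconv hQ).1.measurable
  have hg' : Measurable (etaOf (lawOf2 Y P)) :=
    (prox_eta_isPR1 hsymm hbot hproper hconv hYP).1.measurable
  have hcomp := ae_comp_of_ae_law hg hg' Y huniq
  rw [hA]
  exact hrep.trans hcomp.symm

lemma lawOf2_eq_map {g : ℝ → ℝ} (hg : Measurable g) (Y P : L2)
    (h : (fun t => P t) =ᵐ[unitMeasure] fun t => g (Y t)) :
    lawOf2 Y P = Measure.map (fun y => (y, g y)) (lawOf Y) := by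
  rw [lawOf2, lawOf]
  have h1 : (fun t => (Y t, P t)) =ᵐ[unitMeasure] fun t => (Y t, g (Y t)) := by
    filter_upwards [h] with t ht
    rw [ht]
  rw [Measure.map_congr h1]
  have h2 : (fun t => (Y t, g (Y t))) = (fun y => (y, g y)) ∘ fun t => Y t := rfl
  have hm : Measurable (fun y : ℝ => (y, g y)) := measurable_id.prodMk hg
  rw [h2, ← Measure.map_map hm (Lp.stronglyMeasurable Y).measurable]

end Assembly

/-- Proposition: symmetric proximal operators on `L2(0,1)` admit an
effective scalar representation. -/
theorem l2_prox_effective_scalar (f : L2 → EReal)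
    (hsymm : SymmL2 f) (hlsc : LowerSemicontinuous f)
    (hbot : ∀ X, f X ≠ ⊥) (hproper : ∃ X, f X ≠ ⊤) (hconv : ConvexE f) :
    ∃ A : Measure ℝ → ℝ → ℝ,
      -- A takes values in PR₁ on P₂(ℝ)
      (∀ ν : Measure ℝ, MemP2 ν → IsPR1 (A ν)) ∧
      -- prox[f](Y) = A(law of Y) ∘ Y
      (∀ Y P : L2, IsProxL2 f Y P →
        (fun t => P t) =ᵐ[unitMeasure] fun t => A (lawOf Y) (Y t)) ∧
      -- in particular, prox[f](Y) is σ(Y)-measurable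
      (∀ Y P : L2, IsProxL2 f Y P →
        ∃ g : ℝ → ℝ, Measurable g ∧ (fun t => P t) =ᵐ[unitMeasure] fun t => g (Y t)) ∧
      -- and the joint law of (Y, prox[f](Y)) depends only on the law of Y
      (∀ Y Y' P P' : L2, IsProxL2 f Y P → IsProxL2 f Y' P' → lawOf Y = lawOf Y' →
        lawOf2 Y P = lawOf2 Y' P') := by
  refine ⟨AOf f, fun ν _ => AOf_pr1 hsymm hbot hproper hconv ν,
    fun Y P h => AOf_spec hsymm hbot hproper hconv h, ?_, ?_⟩
  · intro Y P h
    exact ⟨AOf f (lawOf Y), (AOf_pr1 hsymm hbot hproper hconv _).1.measurable,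
      AOf_spec hsymm hbot hproper hconv h⟩
  · intro Y Y' P P' hYP hY'P' hlaw
    have hg : Measurable (AOf f (lawOf Y)) :=
      (AOf_pr1 hsymm hbot hproper hconv _).1.measurable
    have e1 := lawOf2_eq_map hg Y P (AOf_spec hsymm hbot hproper hconv hYP)
    have e2' := AOf_spec hsymm hbot hproper hconv hY'P'
    rw [← hlaw] at e2'
    have e2 := lawOf2_eq_map hg Y' P' e2'
    rw [e1, e2, hlaw]

end
end

section
/- Let f: L2(0,1) → ℝ∪{+∞} be symmetric, lower semicontinuous, proper, and convex. If (X,G) and (X′,G′) are pairs in L2(0,1)² with the same joint law and G ∈ ∂f(X), then G′ ∈ ∂f(X′). -/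
open MeasureTheory ProbabilityTheory Filter
open scoped ENNReal NNReal

noncomputable section

section machinery
open Set

def cum (C : Set ℝ) (t : ℝ) : ℝ := (volume (C ∩ Set.Iic t)).toReal

def icum (C : Set ℝ) (s : ℝ) : ℝ :=
  sInf ({u ∈ Set.Icc (0:ℝ) 1 | s ≤ cum C u} ∪ {1})

variable {C : Set ℝ}

lemma vol_fin (hC1 : C ⊆ Set.Ioo 0 1) (t : ℝ) : volume (C ∩ Set.Iic t) ≠ ⊤ := by
  have h : volume (C ∩ Set.Iic t) ≤ volume (Set.Ioo (0:ℝ) 1) :=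
    measure_mono (fun x hx => hC1 hx.1)
  exact ne_top_of_le_ne_top (by simp [Real.volume_Ioo]) h

lemma volC_fin (hC1 : C ⊆ Set.Ioo 0 1) : volume C ≠ ⊤ := by
  have h := vol_fin hC1 1
  have e : C ∩ Set.Iic 1 = C :=
    Set.inter_eq_self_of_subset_left (fun x hx => Set.mem_Iic.mpr (hC1 hx).2.le)
  rwa [e] at h

lemma cum_nonneg (t : ℝ) : 0 ≤ cum C t := ENNReal.toReal_nonneg

lemma cum_mono (hC1 : C ⊆ Set.Ioo 0 1) : Monotone (cum C) := by
  intro u t hut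
  exact ENNReal.toReal_mono (vol_fin hC1 t)
    (measure_mono (Set.inter_subset_inter_right _ (Set.Iic_subset_Iic.2 hut)))

lemma cum_le (hC1 : C ⊆ Set.Ioo 0 1) (t : ℝ) : cum C t ≤ (volume C).toReal :=
  ENNReal.toReal_mono (volC_fin hC1) (measure_mono Set.inter_subset_left)

lemma cum_one (hC1 : C ⊆ Set.Ioo 0 1) : cum C 1 = (volume C).toReal := by
  unfold cum
  have e : C ∩ Set.Iic 1 = C :=
    Set.inter_eq_self_of_subset_left (fun x hx => Set.mem_Iic.mpr (hC1 hx).2.le)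
  rw [e]

lemma cum_nonpos (hC1 : C ⊆ Set.Ioo 0 1) {t : ℝ} (ht : t ≤ 0) : cum C t = 0 := by
  unfold cum
  have h : C ∩ Set.Iic t = ∅ := by
    ext x; simp only [Set.mem_inter_iff, Set.mem_Iic, Set.mem_empty_iff_false, iff_false]
    rintro ⟨hx, hxt⟩; exact absurd ((hC1 hx).1) (not_lt.2 (hxt.trans ht))
  simp [h]

lemma cum_lip (hC1 : C ⊆ Set.Ioo 0 1) {u t : ℝ} (hut : u ≤ t) :
    cum C t ≤ cum C u + (t - u) := by
  have hsub : C ∩ Set.Iic t ⊆ (C ∩ Set.Iic u) ∪ Set.Ioc u t := by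
    rintro x ⟨hx, hxt⟩
    rcases le_or_gt x u with h | h
    · exact Or.inl ⟨hx, h⟩
    · exact Or.inr ⟨h, hxt⟩
  have h1 : volume (C ∩ Set.Iic t) ≤ volume (C ∩ Set.Iic u) + ENNReal.ofReal (t - u) := by
    calc volume (C ∩ Set.Iic t) ≤ volume ((C ∩ Set.Iic u) ∪ Set.Ioc u t) := measure_mono hsub
    _ ≤ volume (C ∩ Set.Iic u) + volume (Set.Ioc u t) := measure_union_le _ _
    _ = volume (C ∩ Set.Iic u) + ENNReal.ofReal (t - u) := by rw [Real.volume_Ioc]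
  have h2 := ENNReal.toReal_mono
    (ENNReal.add_ne_top.2 ⟨vol_fin hC1 u, ENNReal.ofReal_ne_top⟩) h1
  rw [ENNReal.toReal_add (vol_fin hC1 u) ENNReal.ofReal_ne_top,
    ENNReal.toReal_ofReal (by linarith)] at h2
  exact h2

lemma cum_continuous (hC1 : C ⊆ Set.Ioo 0 1) : Continuous (cum C) := by
  have h : LipschitzWith 1 (cum C) := by
    apply LipschitzWith.of_dist_le_mul
    intro x y
    rw [Real.dist_eq, Real.dist_eq, NNReal.coe_one, one_mul, abs_sub_le_iff]
    rcases le_total x y with h | h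
    · have h1 := cum_lip hC1 h
      have h2 := cum_mono hC1 h
      constructor <;> [linarith [abs_nonneg (x-y)]; skip]
      rw [abs_of_nonpos (by linarith)]; linarith
    · have h1 := cum_lip hC1 h
      have h2 := cum_mono hC1 h
      constructor <;> [skip; linarith [abs_nonneg (x-y)]]
      rw [abs_of_nonneg (by linarith)]; linarith
  exact h.continuous

lemma cum_measurable (hC1 : C ⊆ Set.Ioo 0 1) : Measurable (cum C) :=
  (cum_continuous hC1).measurable
section icumlem
variable {C : Set ℝ}

lemma iset_def (C : Set ℝ) (s : ℝ) :
    ({u ∈ Set.Icc (0:ℝ) 1 | s ≤ cum C u} ∪ {1}).Nonempty := ⟨1, Or.inr rfl⟩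

lemma iset_bdd (C : Set ℝ) (s : ℝ) :
    BddBelow ({u ∈ Set.Icc (0:ℝ) 1 | s ≤ cum C u} ∪ {1}) := by
  refine ⟨0, fun x hx => ?_⟩
  rcases hx with ⟨⟨h0, _⟩, _⟩ | h
  · exact h0
  · simp at h; rw [h]; norm_num

lemma iset_closed (hC1 : C ⊆ Set.Ioo 0 1) (s : ℝ) :
    IsClosed ({u ∈ Set.Icc (0:ℝ) 1 | s ≤ cum C u} ∪ {1}) := by
  apply IsClosed.union
  · have : {u ∈ Set.Icc (0:ℝ) 1 | s ≤ cum C u} = Set.Icc 0 1 ∩ cum C ⁻¹' Set.Ici s := rfl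
    rw [this]
    exact isClosed_Icc.inter (isClosed_Ici.preimage (cum_continuous hC1))
  · exact isClosed_singleton

lemma icum_mem (hC1 : C ⊆ Set.Ioo 0 1) (s : ℝ) :
    icum C s ∈ {u ∈ Set.Icc (0:ℝ) 1 | s ≤ cum C u} ∪ {1} :=
  (iset_closed hC1 s).csInf_mem (iset_def C s) (iset_bdd C s)

lemma icum_nonneg (hC1 : C ⊆ Set.Ioo 0 1) (s : ℝ) : 0 ≤ icum C s := by
  rcases icum_mem hC1 s with ⟨⟨h, _⟩, _⟩ | h
  · exact h
  · simp at h; rw [h]; norm_num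

lemma icum_le_one (s : ℝ) : icum C s ≤ 1 := csInf_le (iset_bdd C s) (Or.inr rfl)

lemma icum_mono : Monotone (icum C) := by
  intro s s' hss'
  apply csInf_le_csInf (iset_bdd C s) (iset_def C s')
  rintro x (⟨hx, hsx⟩ | hx)
  · exact Or.inl ⟨hx, hss'.trans hsx⟩
  · exact Or.inr hx

lemma icum_measurable : Measurable (icum C) := (icum_mono).measurable

lemma le_cum_icum (hC1 : C ⊆ Set.Ioo 0 1) {s : ℝ} (hsm : s ≤ (volume C).toReal) :
    s ≤ cum C (icum C s) := by
  rcases icum_mem hC1 s with ⟨_, hsx⟩ | h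
  · exact hsx
  · simp only [Set.mem_singleton_iff] at h; rw [h, cum_one hC1]; exact hsm

lemma icum_le_iff (hC1 : C ⊆ Set.Ioo 0 1) {s t : ℝ} (hs0 : 0 < s)
    (hsm : s ≤ (volume C).toReal) : icum C s ≤ t ↔ s ≤ cum C t := by
  constructor
  · intro h
    exact (le_cum_icum hC1 hsm).trans (cum_mono hC1 h)
  · intro h
    rcases le_or_gt 1 t with h1 | h1
    · exact (icum_le_one s).trans h1
    rcases lt_or_ge t 0 with h0 | h0
    · exfalso; rw [cum_nonpos hC1 h0.le] at h; linarith
    · exact csInf_le (iset_bdd C s) (Or.inl ⟨⟨h0, h1.le⟩, h⟩)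

lemma cum_icum (hC1 : C ⊆ Set.Ioo 0 1) {s : ℝ} (hs0 : 0 ≤ s)
    (hsm : s ≤ (volume C).toReal) : cum C (icum C s) = s := by
  have h1 : s ≤ cum C (icum C s) := le_cum_icum hC1 hsm
  have h0 : (0:ℝ) ≤ icum C s := icum_nonneg hC1 s
  -- intermediate value theorem on [0, icum C s]
  have hIVT := intermediate_value_Icc h0 ((cum_continuous hC1).continuousOn :
    ContinuousOn (cum C) (Set.Icc 0 (icum C s)))
  have hs_mem : s ∈ Set.Icc (cum C 0) (cum C (icum C s)) := by
    rw [cum_nonpos hC1 le_rfl]; exact ⟨hs0, h1⟩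
  obtain ⟨u, hu_mem, hu_eq⟩ := hIVT hs_mem
  have hu_in : u ∈ {u ∈ Set.Icc (0:ℝ) 1 | s ≤ cum C u} ∪ {1} :=
    Or.inl ⟨⟨hu_mem.1, hu_mem.2.trans (icum_le_one s)⟩, hu_eq.ge⟩
  have h2 : icum C s ≤ u := csInf_le (iset_bdd C s) hu_in
  have h3 : u = icum C s := le_antisymm hu_mem.2 h2
  rw [← h3, hu_eq]

end icumlem
section maps
variable {C D : Set ℝ}

instance : IsFiniteMeasure (volume.restrict (Set.Ioo (0:ℝ) 1)) := by
  constructor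
  rw [Measure.restrict_apply MeasurableSet.univ, Set.univ_inter, Real.volume_Ioo]
  exact ENNReal.ofReal_lt_top

lemma restrict_Ioo_fin (m : ℝ) : IsFiniteMeasure (volume.restrict (Set.Ioo (0:ℝ) m)) := by
  constructor
  rw [Measure.restrict_apply MeasurableSet.univ, Set.univ_inter, Real.volume_Ioo]
  exact ENNReal.ofReal_lt_top

lemma restrictC_fin (hC1 : C ⊆ Set.Ioo 0 1) : IsFiniteMeasure (volume.restrict C) := by
  constructor
  rw [Measure.restrict_apply MeasurableSet.univ, Set.univ_inter]
  exact lt_top_iff_ne_top.2 (volC_fin hC1)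

lemma map_icum (hC : MeasurableSet C) (hC1 : C ⊆ Set.Ioo 0 1) :
    Measure.map (icum C) (volume.restrict (Set.Ioo 0 (volume C).toReal))
      = volume.restrict C := by
  set m := (volume C).toReal with hm
  haveI := restrict_Ioo_fin m
  haveI := restrictC_fin hC1
  haveI : IsFiniteMeasure (Measure.map (icum C) (volume.restrict (Set.Ioo 0 m))) :=
    Measure.isFiniteMeasure_map _ _
  apply MeasureTheory.Measure.ext_of_Iic
  intro t
  rw [Measure.map_apply icum_measurable measurableSet_Iic,
    Measure.restrict_apply (icum_measurable measurableSet_Iic),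
    Measure.restrict_apply' hC]
  have hset : icum C ⁻¹' Set.Iic t ∩ Set.Ioo 0 m = Set.Iic (cum C t) ∩ Set.Ioo 0 m := by
    ext s
    simp only [Set.mem_inter_iff, Set.mem_preimage, Set.mem_Iic, Set.mem_Ioo]
    constructor
    · rintro ⟨h1, h2, h3⟩
      exact ⟨(icum_le_iff hC1 h2 h3.le).1 h1, h2, h3⟩
    · rintro ⟨h1, h2, h3⟩
      exact ⟨(icum_le_iff hC1 h2 h3.le).2 h1, h2, h3⟩
  rw [hset]
  have ha0 : 0 ≤ cum C t := cum_nonneg t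
  have ham : cum C t ≤ m := cum_le hC1 t
  have hup : volume (Set.Iic (cum C t) ∩ Set.Ioo 0 m) ≤ ENNReal.ofReal (cum C t) := by
    have : Set.Iic (cum C t) ∩ Set.Ioo 0 m ⊆ Set.Ioc 0 (cum C t) :=
      fun x hx => ⟨hx.2.1, hx.1⟩
    calc volume (Set.Iic (cum C t) ∩ Set.Ioo 0 m) ≤ volume (Set.Ioc 0 (cum C t)) :=
          measure_mono this
      _ = ENNReal.ofReal (cum C t) := by rw [Real.volume_Ioc, sub_zero]
  have hlo : ENNReal.ofReal (cum C t) ≤ volume (Set.Iic (cum C t) ∩ Set.Ioo 0 m) := by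
    have : Set.Ioo 0 (cum C t) ⊆ Set.Iic (cum C t) ∩ Set.Ioo 0 m :=
      fun x hx => ⟨hx.2.le, hx.1, hx.2.trans_le ham⟩
    calc ENNReal.ofReal (cum C t) = volume (Set.Ioo 0 (cum C t)) := by
          rw [Real.volume_Ioo, sub_zero]
      _ ≤ _ := measure_mono this
  have heq : volume (Set.Iic (cum C t) ∩ Set.Ioo 0 m) = ENNReal.ofReal (cum C t) :=
    le_antisymm hup hlo
  rw [heq, Set.inter_comm]
  exact ENNReal.ofReal_toReal (vol_fin hC1 t)

lemma ae_icum_cum (hC : MeasurableSet C) (hC1 : C ⊆ Set.Ioo 0 1) :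
    ∀ᵐ u ∂(volume.restrict C), icum C (cum C u) = u := by
  -- the set of bad points
  set Nall := {u ∈ C | ∃ v, v < u ∧ volume (C ∩ Set.Ioc v u) = 0} with hNall
  have hsub : {u | ¬ icum C (cum C u) = u} ∩ C ⊆ Nall := by
    rintro u ⟨hne, huC⟩
    have hle : icum C (cum C u) ≤ u := by
      apply csInf_le (iset_bdd C _)
      exact Or.inl ⟨⟨(hC1 huC).1.le, (hC1 huC).2.le⟩, le_rfl⟩
    have hlt : icum C (cum C u) < u := lt_of_le_of_ne hle hne
    set v := icum C (cum C u) with hv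
    have hcum_eq : cum C v = cum C u := by
      rcases icum_mem hC1 (cum C u) with ⟨_, h2⟩ | h
      · exact le_antisymm (cum_mono hC1 hlt.le) h2
      · exfalso; simp only [Set.mem_singleton_iff] at h
        rw [← hv] at h; rw [h] at hlt; exact absurd (hC1 huC).2 (not_lt.2 hlt.le)
    refine ⟨huC, v, hlt, ?_⟩
    have hdisj : Disjoint (C ∩ Set.Iic v) (C ∩ Set.Ioc v u) := by
      apply Set.disjoint_left.2
      rintro x ⟨_, hx1⟩ ⟨_, hx2, _⟩
      exact absurd hx1 (not_le.2 hx2)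
    have hunion : C ∩ Set.Iic u = (C ∩ Set.Iic v) ∪ (C ∩ Set.Ioc v u) := by
      ext x
      simp only [Set.mem_inter_iff, Set.mem_Iic, Set.mem_union, Set.mem_Ioc]
      constructor
      · rintro ⟨hx, hxu⟩
        rcases le_or_gt x v with h | h
        · exact Or.inl ⟨hx, h⟩
        · exact Or.inr ⟨hx, h, hxu⟩
      · rintro (⟨hx, hxv⟩ | ⟨hx, _, hxu⟩)
        · exact ⟨hx, hxv.trans hlt.le⟩
        · exact ⟨hx, hxu⟩
    have hmeas : volume (C ∩ Set.Iic u) = volume (C ∩ Set.Iic v) + volume (C ∩ Set.Ioc v u) := by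
      rw [hunion]
      exact measure_union hdisj (hC.inter measurableSet_Ioc)
    have h1 : cum C u = cum C v := hcum_eq.symm
    unfold cum at h1
    rw [hmeas] at h1
    have hfin1 : volume (C ∩ Set.Iic v) ≠ ⊤ := vol_fin hC1 v
    have hfin2 : volume (C ∩ Set.Ioc v u) ≠ ⊤ := by
      refine ne_top_of_le_ne_top (vol_fin hC1 u) (measure_mono ?_)
      rintro x ⟨hx, _, hxu⟩; exact ⟨hx, hxu⟩
    rw [ENNReal.toReal_add hfin1 hfin2] at h1
    have := ENNReal.toReal_eq_zero_iff (volume (C ∩ Set.Ioc v u))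
    have h2 : (volume (C ∩ Set.Ioc v u)).toReal = 0 := by linarith
    rcases this.1 h2 with h | h
    · exact h
    · exact absurd h hfin2
  -- Nall is null
  have hNq : ∀ q : ℚ, volume {u ∈ C | (q:ℝ) < u ∧ volume (C ∩ Set.Ioc (q:ℝ) u) = 0} = 0 := by
    intro q
    set Nq := {u ∈ C | (q:ℝ) < u ∧ volume (C ∩ Set.Ioc (q:ℝ) u) = 0} with hNqdef
    set Er : ℚ → Set ℝ := fun r =>
      if volume (C ∩ Set.Ioc (q:ℝ) (r:ℝ)) = 0 then C ∩ Set.Ioc (q:ℝ) (r:ℝ) else ∅ with hEr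
    set Mq := {u ∈ Nq | ∀ u' ∈ Nq, u' ≤ u} with hMq
    have hsub2 : Nq ⊆ (⋃ r : ℚ, Er r) ∪ Mq := by
      intro u hu
      by_cases hmax : ∀ u' ∈ Nq, u' ≤ u
      · exact Or.inr ⟨hu, hmax⟩
      · push_neg at hmax
        obtain ⟨u', hu', huu'⟩ := hmax
        obtain ⟨r, hr1, hr2⟩ := exists_rat_btwn huu'
        apply Or.inl
        apply Set.mem_iUnion.2 ⟨r, ?_⟩
        have hr0 : volume (C ∩ Set.Ioc (q:ℝ) (r:ℝ)) = 0 := by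
          apply measure_mono_null _ hu'.2.2
          rintro x ⟨hx, hx1, hx2⟩
          exact ⟨hx, hx1, hx2.trans hr2.le⟩
        rw [hEr]
        simp only [hr0, if_true]
        exact ⟨hu.1, hu.2.1, hr1.le⟩
    have hErnull : ∀ r : ℚ, volume (Er r) = 0 := by
      intro r
      rw [hEr]
      by_cases h : volume (C ∩ Set.Ioc (q:ℝ) (r:ℝ)) = 0
      · simpa [h] using h
      · simp [h]
    have hMqnull : volume Mq = 0 := by
      apply Set.Subsingleton.measure_zero
      rintro a ⟨ha, hamax⟩ b ⟨hb, hbmax⟩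
      exact le_antisymm (hbmax a ha) (hamax b hb)
    have hle0 : volume Nq ≤ 0 :=
      calc volume Nq ≤ volume ((⋃ r : ℚ, Er r) ∪ Mq) := measure_mono hsub2
        _ ≤ volume (⋃ r : ℚ, Er r) + volume Mq := measure_union_le _ _
        _ ≤ 0 := by
            rw [hMqnull, add_zero]
            exact le_trans (measure_iUnion_le _) (by simp [hErnull])
    exact le_antisymm hle0 zero_le
  have hNallnull : volume Nall = 0 := by
    have hUnull : volume (⋃ q : ℚ, {u ∈ C | (q:ℝ) < u ∧ volume (C ∩ Set.Ioc (q:ℝ) u) = 0}) = 0 :=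
      le_antisymm (le_trans (measure_iUnion_le _) (by simp only [hNq, tsum_zero, le_refl])) zero_le
    refine measure_mono_null ?_ hUnull
    rintro u ⟨huC, v, hvu, hnull⟩
    obtain ⟨q, hq1, hq2⟩ := exists_rat_btwn hvu
    refine Set.mem_iUnion.2 ⟨q, huC, hq2, ?_⟩
    apply measure_mono_null _ hnull
    rintro x ⟨hx, hx1, hx2⟩
    exact ⟨hx, hq1.trans hx1, hx2⟩
  rw [ae_iff, Measure.restrict_apply' hC]
  exact measure_mono_null hsub hNallnull

end maps
section maps2
variable {C D : Set ℝ}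

lemma ae_cum_icum (hC : MeasurableSet C) (hC1 : C ⊆ Set.Ioo 0 1) :
    ∀ᵐ s ∂(volume.restrict (Set.Ioo 0 (volume C).toReal)), cum C (icum C s) = s := by
  filter_upwards [ae_restrict_mem measurableSet_Ioo] with s hs
  exact cum_icum hC1 hs.1.le hs.2.le

lemma map_cum (hC : MeasurableSet C) (hC1 : C ⊆ Set.Ioo 0 1) :
    Measure.map (cum C) (volume.restrict C)
      = volume.restrict (Set.Ioo 0 (volume C).toReal) := by
  conv_lhs => rw [← map_icum hC hC1]
  rw [Measure.map_map (cum_measurable hC1) icum_measurable]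
  have hcongr : Measure.map (cum C ∘ icum C) (volume.restrict (Set.Ioo 0 (volume C).toReal))
      = Measure.map id (volume.restrict (Set.Ioo 0 (volume C).toReal)) := by
    apply Measure.map_congr
    filter_upwards [ae_cum_icum hC hC1] with s hs
    exact hs
  rw [hcongr, Measure.map_id]

lemma map_trans (hC : MeasurableSet C) (hC1 : C ⊆ Set.Ioo 0 1)
    (hD : MeasurableSet D) (hD1 : D ⊆ Set.Ioo 0 1) (hCD : volume C = volume D) :
    Measure.map (fun u => icum D (cum C u)) (volume.restrict C) = volume.restrict D := by
  have h : (fun u => icum D (cum C u)) = icum D ∘ cum C := rfl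
  rw [h, ← Measure.map_map icum_measurable (cum_measurable hC1), map_cum hC hC1, hCD,
    map_icum hD hD1]

end maps2
section transfer

def cellSet (h : ℝ → ℝ) (ε : ℝ) (k : ℤ) : Set ℝ :=
  Set.Ioo 0 1 ∩ h ⁻¹' {x : ℝ | ⌊x / ε⌋ = k}

def transS (g g' : ℝ → ℝ) (ε : ℝ) : ℝ → ℝ :=
  (fun p : ℝ × ℤ => icum (cellSet g' ε p.2) (cum (cellSet g ε p.2) p.1)) ∘
    (fun u => (u, ⌊g u / ε⌋))

lemma transS_apply (g g' : ℝ → ℝ) (ε u : ℝ) :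
    transS g g' ε u = icum (cellSet g' ε ⌊g u / ε⌋) (cum (cellSet g ε ⌊g u / ε⌋) u) := rfl

lemma cellSet_meas {h : ℝ → ℝ} (hh : Measurable h) (ε : ℝ) (k : ℤ) :
    MeasurableSet (cellSet h ε k) :=
  measurableSet_Ioo.inter (hh ((measurable_id.div_const ε).floor (MeasurableSet.singleton k)))

lemma cellSet_sub (h : ℝ → ℝ) (ε : ℝ) (k : ℤ) : cellSet h ε k ⊆ Set.Ioo 0 1 :=
  Set.inter_subset_left

lemma sk_meas (g g' : ℝ → ℝ) (ε : ℝ) (k : ℤ) :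
    Measurable (fun u => icum (cellSet g' ε k) (cum (cellSet g ε k) u)) := by
  have hcomp := Measurable.comp (icum_measurable (C := cellSet g' ε k))
    (cum_measurable (C := cellSet g ε k) (cellSet_sub g ε k))
  exact hcomp

lemma transS_meas {g g' : ℝ → ℝ} (hg : Measurable g) (ε : ℝ) :
    Measurable (transS g g' ε) := by
  have h1 : Measurable (fun p : ℝ × ℤ => icum (cellSet g' ε p.2) (cum (cellSet g ε p.2) p.1)) := by
    apply measurable_from_prod_countable_left
    intro k
    exact sk_meas g g' ε k
  have h2 : Measurable (fun u : ℝ => (u, ⌊g u / ε⌋)) :=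
    measurable_id.prodMk (hg.div_const ε).floor
  exact h1.comp h2

lemma transfer_map {g g' : ℝ → ℝ} (hg : Measurable g) (hg' : Measurable g')
    (hlaw : Measure.map g (volume.restrict (Set.Ioo (0:ℝ) 1))
      = Measure.map g' (volume.restrict (Set.Ioo (0:ℝ) 1)))
    {ε : ℝ} (hε : 0 < ε) :
    Measure.map (transS g g' ε) (volume.restrict (Set.Ioo (0:ℝ) 1))
        = volume.restrict (Set.Ioo (0:ℝ) 1) ∧
      ∀ᵐ u ∂(volume.restrict (Set.Ioo (0:ℝ) 1)), |g u - g' (transS g g' ε u)| ≤ ε := by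
  have hEmeas : ∀ k : ℤ, MeasurableSet {x : ℝ | ⌊x / ε⌋ = k} := fun k =>
    (measurable_id.div_const ε).floor (MeasurableSet.singleton k)
  have hAmeas : ∀ k, MeasurableSet (cellSet g ε k) := cellSet_meas hg ε
  have hBmeas : ∀ k, MeasurableSet (cellSet g' ε k) := cellSet_meas hg' ε
  have hABvol : ∀ k, volume (cellSet g ε k) = volume (cellSet g' ε k) := by
    intro k
    have h1 : volume (cellSet g ε k)
        = (volume.restrict (Set.Ioo (0:ℝ) 1)) (g ⁻¹' {x : ℝ | ⌊x / ε⌋ = k}) := by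
      rw [Measure.restrict_apply (hg (hEmeas k)), Set.inter_comm]
      unfold cellSet
      rfl
    have h2 : volume (cellSet g' ε k)
        = (volume.restrict (Set.Ioo (0:ℝ) 1)) (g' ⁻¹' {x : ℝ | ⌊x / ε⌋ = k}) := by
      rw [Measure.restrict_apply (hg' (hEmeas k)), Set.inter_comm]
      unfold cellSet
      rfl
    rw [h1, h2, ← Measure.map_apply hg (hEmeas k), ← Measure.map_apply hg' (hEmeas k), hlaw]
  have hSkmeas : ∀ k : ℤ, Measurable (fun u => icum (cellSet g' ε k) (cum (cellSet g ε k) u)) :=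
    sk_meas g g' ε
  have hSmeas : Measurable (transS g g' ε) := transS_meas hg ε
  have hdisj : ∀ h : ℝ → ℝ, Pairwise (Function.onFun Disjoint fun k => cellSet h ε k) := by
    intro h k k' hkk'
    simp only [Function.onFun, Set.disjoint_left]
    rintro x ⟨_, hx1⟩ ⟨_, hx2⟩
    exact hkk' (hx1.symm.trans hx2)
  have hcover : ∀ h : ℝ → ℝ, Set.Ioo (0:ℝ) 1 = ⋃ k, cellSet h ε k := by
    intro h
    ext u
    constructor
    · intro hu; exact Set.mem_iUnion.2 ⟨⌊h u / ε⌋, hu, rfl⟩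
    · rintro hu; obtain ⟨k, hk⟩ := Set.mem_iUnion.1 hu; exact hk.1
  have hmapk : ∀ k, Measure.map (fun u => icum (cellSet g' ε k) (cum (cellSet g ε k) u))
      (volume.restrict (cellSet g ε k)) = volume.restrict (cellSet g' ε k) :=
    fun k => map_trans (hAmeas k) (cellSet_sub g ε k) (hBmeas k) (cellSet_sub g' ε k) (hABvol k)
  have hSeq : ∀ k, ∀ u ∈ cellSet g ε k,
      transS g g' ε u = icum (cellSet g' ε k) (cum (cellSet g ε k) u) := by
    rintro k u ⟨_, hu2⟩
    rw [transS_apply, show ⌊g u / ε⌋ = k from hu2]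
  constructor
  · -- measure preservation
    apply Measure.ext
    intro s hs
    rw [Measure.map_apply hSmeas hs, Measure.restrict_apply' measurableSet_Ioo,
      Measure.restrict_apply' measurableSet_Ioo]
    have h1 : transS g g' ε ⁻¹' s ∩ Set.Ioo 0 1 = ⋃ k, transS g g' ε ⁻¹' s ∩ cellSet g ε k := by
      rw [hcover g, Set.inter_iUnion]
    have h2 : s ∩ Set.Ioo 0 1 = ⋃ k, s ∩ cellSet g' ε k := by
      rw [hcover g', Set.inter_iUnion]
    rw [h1, h2]
    rw [measure_iUnion (fun k k' hkk' => (hdisj g hkk').mono Set.inter_subset_right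
        Set.inter_subset_right) (fun k => (hSmeas hs).inter (hAmeas k)),
      measure_iUnion (fun k k' hkk' => (hdisj g' hkk').mono Set.inter_subset_right
        Set.inter_subset_right) (fun k => hs.inter (hBmeas k))]
    congr 1
    ext k
    have h3 : transS g g' ε ⁻¹' s ∩ cellSet g ε k
        = (fun u => icum (cellSet g' ε k) (cum (cellSet g ε k) u)) ⁻¹' s ∩ cellSet g ε k := by
      ext u
      simp only [Set.mem_inter_iff, Set.mem_preimage]
      constructor
      · rintro ⟨h, hu⟩; rw [hSeq k u hu] at h; exact ⟨h, hu⟩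
      · rintro ⟨h, hu⟩; rw [← hSeq k u hu] at h; exact ⟨h, hu⟩
    rw [h3, ← Measure.restrict_apply' (hAmeas k),
      ← Measure.map_apply (hSkmeas k) hs, hmapk k, Measure.restrict_apply' (hBmeas k)]
  · -- a.e. closeness
    rw [ae_iff]
    rw [Measure.restrict_apply' measurableSet_Ioo]
    have h1 : {u : ℝ | ¬ |g u - g' (transS g g' ε u)| ≤ ε} ∩ Set.Ioo 0 1
        = ⋃ k, {u : ℝ | ¬ |g u - g' (transS g g' ε u)| ≤ ε} ∩ cellSet g ε k := by
      rw [hcover g, Set.inter_iUnion]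
    rw [h1]
    refine le_antisymm (le_trans (measure_iUnion_le _) ?_) zero_le
    have hknull : ∀ k,
        volume ({u : ℝ | ¬ |g u - g' (transS g g' ε u)| ≤ ε} ∩ cellSet g ε k) = 0 := by
      intro k
      have hae : volume ({u : ℝ | ¬ ⌊g' (icum (cellSet g' ε k) (cum (cellSet g ε k) u)) / ε⌋ = k}
          ∩ cellSet g ε k) = 0 := by
        have hEc : MeasurableSet {x : ℝ | ¬ ⌊x / ε⌋ = k} := (hEmeas k).compl
        have h4 : {u : ℝ | ¬ ⌊g' (icum (cellSet g' ε k) (cum (cellSet g ε k) u)) / ε⌋ = k}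
            = (fun u => icum (cellSet g' ε k) (cum (cellSet g ε k) u)) ⁻¹'
              (g' ⁻¹' {x : ℝ | ¬ ⌊x / ε⌋ = k}) := rfl
        rw [h4, ← Measure.restrict_apply' (hAmeas k),
          ← Measure.map_apply (hSkmeas k) (hg' hEc), hmapk k,
          Measure.restrict_apply' (hBmeas k)]
        have h5 : g' ⁻¹' {x : ℝ | ¬ ⌊x / ε⌋ = k} ∩ cellSet g' ε k = ∅ := by
          ext x
          simp only [Set.mem_inter_iff, Set.mem_preimage, Set.mem_setOf_eq,
            Set.mem_empty_iff_false, iff_false, not_and]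
          rintro hx ⟨_, hx2⟩
          exact hx hx2
        rw [h5]; exact measure_empty
      refine measure_mono_null ?_ hae
      rintro u ⟨hu_bad, hu_A⟩
      refine ⟨?_, hu_A⟩
      intro hfloor
      apply hu_bad
      have hgu : ⌊g u / ε⌋ = k := hu_A.2
      have hw : ∀ y : ℝ, ⌊y / ε⌋ = k → (k : ℝ) * ε ≤ y ∧ y < ((k : ℝ) + 1) * ε := by
        intro y hy
        have h6 : (k : ℝ) ≤ y / ε ∧ y / ε < (k : ℝ) + 1 := by
          constructor
          · exact_mod_cast (Int.floor_eq_iff.1 hy).1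
          · exact_mod_cast (Int.floor_eq_iff.1 hy).2
        constructor
        · calc (k : ℝ) * ε ≤ (y / ε) * ε := mul_le_mul_of_nonneg_right h6.1 hε.le
          _ = y := by field_simp
        · calc y = (y / ε) * ε := by field_simp
          _ < ((k : ℝ) + 1) * ε := mul_lt_mul_of_pos_right h6.2 hε
      have h7 := hw _ hgu
      have h8 := hw _ hfloor
      rw [hSeq k u hu_A, abs_le]
      constructor <;> nlinarith [h7.1, h7.2, h8.1, h8.2]
    simp only [hknull, tsum_zero, le_refl]
end transfer

end machinery

section mainhelpers

instance : IsFiniteMeasure unitMeasure := by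
  constructor
  rw [unitMeasure, Measure.restrict_apply MeasurableSet.univ, Set.univ_inter, Real.volume_Ioo]
  exact ENNReal.ofReal_lt_top

lemma unitMeasure_def : unitMeasure = volume.restrict (Set.Ioo 0 1) := rfl

lemma L2mul_int (a b : L2) : Integrable (fun t => a t * b t) unitMeasure := by
  have h := MeasureTheory.L2.integrable_inner (𝕜 := ℝ) a b
  simpa [RCLike.inner_apply, starRingEnd_apply, star_trivial, mul_comm] using h

lemma law_fst (X G : L2) : lawOf X = Measure.map Prod.fst (lawOf2 X G) := by
  unfold lawOf lawOf2
  rw [Measure.map_map measurable_fst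
    ((Lp.stronglyMeasurable X).measurable.prodMk (Lp.stronglyMeasurable G).measurable)]
  rfl

lemma law_snd (X G : L2) :
    Measure.map (fun t => G t) unitMeasure = Measure.map Prod.snd (lawOf2 X G) := by
  unfold lawOf2
  rw [Measure.map_map measurable_snd
    ((Lp.stronglyMeasurable X).measurable.prodMk (Lp.stronglyMeasurable G).measurable)]
  rfl

end mainhelpers

/-- Proposition: the subdifferential of a symmetric convex function on
`L2(0,1)` depends only on the joint law. -/
theorem subdiff_symmetric (f : L2 → EReal)
    (hsymm : SymmL2 f) (hlsc : LowerSemicontinuous f)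
    (hbot : ∀ X, f X ≠ ⊥) (hproper : ∃ X, f X ≠ ⊤) (hconv : ConvexE f)
    (X G X' G' : L2) (hlaw : lawOf2 X G = lawOf2 X' G')
    (hsub : InSubdiff f X G) :
    InSubdiff f X' G' := by
  classical
  have hXm := (Lp.stronglyMeasurable X).measurable
  have hGm := (Lp.stronglyMeasurable G).measurable
  have hX'm := (Lp.stronglyMeasurable X').measurable
  have hG'm := (Lp.stronglyMeasurable G').measurable
  have hYm0 : ∀ W : L2, Measurable (⇑W) := fun W => (Lp.stronglyMeasurable W).measurable
  -- marginals
  have hlawX : lawOf X = lawOf X' := by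
    rw [law_fst X G, law_fst X' G', hlaw]
  have hlawG : Measure.map (fun t => G t) unitMeasure
      = Measure.map (fun t => G' t) unitMeasure := by
    rw [law_snd X G, law_snd X' G', hlaw]
  have hfX : f X = f X' := hsymm X X' hlawX
  -- f X is finite
  obtain ⟨Y₀, hY₀⟩ := hproper
  have hfXne : f X ≠ ⊤ := by
    intro htop
    have h := hsub Y₀
    rw [htop, EReal.top_add_coe] at h
    exact hY₀ (top_le_iff.1 h)
  set r : ℝ := (f X).toReal with hrdef
  have hr : (r : EReal) = f X := EReal.coe_toReal hfXne (hbot X)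
  -- transfer of the product integral through the joint law
  have hGX : ∫ t, G t * X t ∂unitMeasure = ∫ t, G' t * X' t ∂unitMeasure := by
    have hpair : AEMeasurable (fun t => (X t, G t)) unitMeasure :=
      (hXm.prodMk hGm).aemeasurable
    have hpair' : AEMeasurable (fun t => (X' t, G' t)) unitMeasure :=
      (hX'm.prodMk hG'm).aemeasurable
    have hcont : AEStronglyMeasurable (fun q : ℝ × ℝ => q.2 * q.1)
        (Measure.map (fun t => (X t, G t)) unitMeasure) :=
      (continuous_snd.mul continuous_fst).aestronglyMeasurable
    have hcont' : AEStronglyMeasurable (fun q : ℝ × ℝ => q.2 * q.1)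
        (Measure.map (fun t => (X' t, G' t)) unitMeasure) :=
      (continuous_snd.mul continuous_fst).aestronglyMeasurable
    have e1 : ∫ q : ℝ × ℝ, q.2 * q.1 ∂(lawOf2 X G) = ∫ t, G t * X t ∂unitMeasure := by
      unfold lawOf2
      rw [integral_map hpair hcont]
    have e2 : ∫ q : ℝ × ℝ, q.2 * q.1 ∂(lawOf2 X' G') = ∫ t, G' t * X' t ∂unitMeasure := by
      unfold lawOf2
      rw [integral_map hpair' hcont']
    rw [← e1, ← e2, hlaw]
  intro Y
  by_cases hYtop : f Y = ⊤
  · rw [hYtop]; exact le_top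
  set s : ℝ := (f Y).toReal with hsdef
  have hs : (s : EReal) = f Y := EReal.coe_toReal hYtop (hbot Y)
  have hfX' : f X' = (r : EReal) := by rw [← hfX, hr]
  have hInt1 : Integrable (fun t => G' t * Y t) unitMeasure := L2mul_int G' Y
  have hInt2 : Integrable (fun t => G' t * X' t) unitMeasure := L2mul_int G' X'
  have hsplit : ∫ t, G' t * (Y t - X' t) ∂unitMeasure
      = (∫ t, G' t * Y t ∂unitMeasure) - ∫ t, G' t * X' t ∂unitMeasure := by
    rw [← integral_sub hInt1 hInt2]
    congr 1; funext t; ring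
  set c : ℝ := ∫ t, |Y t| ∂unitMeasure with hcdef
  have hc0 : 0 ≤ c := integral_nonneg (fun t => abs_nonneg _)
  have key : ∀ ε : ℝ, 0 < ε →
      r + ∫ t, G' t * (Y t - X' t) ∂unitMeasure ≤ s + ε * c := by
    intro ε hε
    obtain ⟨hmap, hclose⟩ := transfer_map hGm hG'm
      (by rw [← unitMeasure_def]; exact hlawG) hε
    set S := transS (⇑G) (⇑G') ε with hSdef
    have hSmeas : Measurable S := transS_meas hGm ε
    have hMP : MeasurePreserving S unitMeasure unitMeasure :=
      ⟨hSmeas, by rw [unitMeasure_def]; exact hmap⟩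
    have hclose' : ∀ᵐ u ∂unitMeasure, |G u - G' (S u)| ≤ ε := hclose
    set Z : L2 := Lp.compMeasurePreserving S hMP Y with hZdef
    have hZae : ⇑Z =ᵐ[unitMeasure] (⇑Y) ∘ S := Lp.coeFn_compMeasurePreserving Y hMP
    have hZlaw : lawOf Z = lawOf Y := by
      unfold lawOf
      rw [Measure.map_congr hZae, ← Measure.map_map (hYm0 Y) hSmeas, hMP.map_eq]
    have hfZ : f Z = f Y := hsymm Z Y hZlaw
    have hsubZ := hsub Z
    rw [← hr, hfZ, ← hs] at hsubZ
    have hA : r + ∫ t, G t * (Z t - X t) ∂unitMeasure ≤ s := by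
      rw [← EReal.coe_le_coe_iff, EReal.coe_add]; exact hsubZ
    have hIz : Integrable (fun t => G t * Z t) unitMeasure := L2mul_int G Z
    have hIx : Integrable (fun t => G t * X t) unitMeasure := L2mul_int G X
    have hAsplit : ∫ t, G t * (Z t - X t) ∂unitMeasure
        = (∫ t, G t * Z t ∂unitMeasure) - ∫ t, G t * X t ∂unitMeasure := by
      rw [← integral_sub hIz hIx]
      congr 1; funext t; ring
    -- compare ∫ G·Z with ∫ G'·Y
    have hcompint : Integrable (fun t => G' (S t) * Y (S t)) unitMeasure := by
      have h := (hMP.integrable_comp (hG'm.mul (hYm0 Y)).aestronglyMeasurable).2 hInt1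
      exact h
    have hYabsint : Integrable (fun t => |Y t|) unitMeasure :=
      ((Lp.memLp Y).integrable (by norm_num)).abs
    have hYabsSint : Integrable (fun t => |Y (S t)|) unitMeasure := by
      have h := (hMP.integrable_comp hYabsint.aestronglyMeasurable).2 hYabsint
      exact h
    have hlow : ∫ t, (G' (S t) * Y (S t) - ε * |Y (S t)|) ∂unitMeasure
        ≤ ∫ t, G t * Z t ∂unitMeasure := by
      apply integral_mono_ae (hcompint.sub (hYabsSint.const_mul ε)) hIz
      filter_upwards [hclose', hZae] with t h1 h2
      have h2' : Z t = Y (S t) := h2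
      have h3 : |(G t - G' (S t)) * Y (S t)| ≤ ε * |Y (S t)| := by
        rw [abs_mul]; exact mul_le_mul_of_nonneg_right h1 (abs_nonneg _)
      have h4 := neg_abs_le ((G t - G' (S t)) * Y (S t))
      simp only [Pi.sub_apply]
      rw [h2']
      nlinarith [h3, h4]
    have htrans1 : ∫ t, G' (S t) * Y (S t) ∂unitMeasure = ∫ t, G' t * Y t ∂unitMeasure := by
      have hm : AEStronglyMeasurable (fun q : ℝ => G' q * Y q)
          (Measure.map S unitMeasure) := (hG'm.mul (hYm0 Y)).aestronglyMeasurable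
      have h := integral_map (μ := unitMeasure) hSmeas.aemeasurable hm
      rw [hMP.map_eq] at h
      exact h.symm
    have htrans2 : ∫ t, |Y (S t)| ∂unitMeasure = c := by
      have hm : AEStronglyMeasurable (fun q : ℝ => |Y q|)
          (Measure.map S unitMeasure) := (hYm0 Y).abs.aestronglyMeasurable
      have h := integral_map (μ := unitMeasure) hSmeas.aemeasurable hm
      rw [hMP.map_eq] at h
      exact h.symm
    have hsub2 : ∫ t, (G' (S t) * Y (S t) - ε * |Y (S t)|) ∂unitMeasure
        = (∫ t, G' t * Y t ∂unitMeasure) - ε * c := by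
      rw [integral_sub hcompint (hYabsSint.const_mul ε), htrans1,
        integral_const_mul, htrans2]
    rw [hsub2] at hlow
    rw [hsplit, ← hGX]
    rw [hAsplit] at hA
    linarith
  have hfinal : r + ∫ t, G' t * (Y t - X' t) ∂unitMeasure ≤ s := by
    apply le_of_forall_pos_le_add
    intro ε' hε'
    have h := key (ε' / (c + 1)) (by positivity)
    have h2 : (ε' / (c + 1)) * c ≤ ε' := by
      rw [div_mul_eq_mul_div, div_le_iff₀ (by linarith)]
      nlinarith
    linarith
  rw [hfX', ← hs, ← EReal.coe_add]
  exact EReal.coe_le_coe_iff.2 hfinal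


end
end
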